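/- arXiv:0901.0824 — 3 statements merged into one kernel-verified Lean document; each statement's English description precedes it below -/
import Mathlib

section
/- Suppose the gain matrix V is irreducible and p̄ ∈ P is the max-min SIR-balanced power vector. Then the set of active power constraints at p̄ consists exactly of the indices of maximal spectral radius: N₀(p̄) = {n ∈ {1,…,N} : ρ(B^(n)) = max_{1≤m≤N} ρ(B^(m))}. -/
open Matrix

/-- A nonnegative square matrix is irreducible. -/
def MatIrred {m : Type*} [Fintype m] (M : Matrix m m ℝ) : Prop :=
  ∀ S : Set m, S.Nonempty → S ≠ Set.univ → ∃ i ∈ S, ∃ j ∉ S, 0 < M i j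

/-- Spectral radius of a real square matrix (largest modulus of a complex eigenvalue). -/
noncomputable def specRad {m : Type*} [Fintype m] [DecidableEq m] (M : Matrix m m ℝ) : ℝ :=
  sSup ((fun w : ℂ => ‖w‖) '' spectrum ℂ (M.map fun x => (x : ℂ)))

/-- SIR of link `k` under power vector `p`. -/
noncomputable def SIR {K : ℕ} (V : Matrix (Fin K) (Fin K) ℝ) (z : Fin K → ℝ)
    (p : Fin K → ℝ) (k : Fin K) : ℝ :=
  p k / (V.mulVec p k + z k)

/-- The polytope of admissible power vectors. -/
def Pset {K N : ℕ} (C : Matrix (Fin N) (Fin K) ℝ) (phat : Fin N → ℝ) :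
    Set (Fin K → ℝ) :=
  {p | (∀ k, 0 ≤ p k) ∧ ∀ n, C.mulVec p n ≤ phat n}

/-- Admissible power vectors with all entries positive. -/
def Pplus {K N : ℕ} (C : Matrix (Fin N) (Fin K) ℝ) (phat : Fin N → ℝ) :
    Set (Fin K → ℝ) :=
  {p ∈ Pset C phat | ∀ k, 0 < p k}

/-- Normalized power-constraint functions `gₙ(p) = cₙᵀ p / Pₙ`. -/
noncomputable def gcon {K N : ℕ} (C : Matrix (Fin N) (Fin K) ℝ) (phat : Fin N → ℝ)
    (n : Fin N) (p : Fin K → ℝ) : ℝ :=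
  C.mulVec p n / phat n

/-- The matrices `B⁽ⁿ⁾ = Γ (V + (1/Pₙ) z cₙᵀ)`. -/
noncomputable def Bmat {K N : ℕ} (V : Matrix (Fin K) (Fin K) ℝ) (z : Fin K → ℝ)
    (γ : Fin K → ℝ) (C : Matrix (Fin N) (Fin K) ℝ) (phat : Fin N → ℝ) (n : Fin N) :
    Matrix (Fin K) (Fin K) ℝ :=
  Matrix.diagonal γ * (V + (phat n)⁻¹ • Matrix.vecMulVec z (C n))

/-- The extended `(K+1)×(K+1)` matrices `A⁽ⁿ⁾`. -/
noncomputable def Amat {K N : ℕ} (V : Matrix (Fin K) (Fin K) ℝ) (z : Fin K → ℝ)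
    (γ : Fin K → ℝ) (C : Matrix (Fin N) (Fin K) ℝ) (phat : Fin N → ℝ) (n : Fin N) :
    Matrix (Fin (K+1)) (Fin (K+1)) ℝ :=
  Matrix.of fun i j =>
    if hi : (i : ℕ) < K then
      if hj : (j : ℕ) < K then γ ⟨i, hi⟩ * V ⟨i, hi⟩ ⟨j, hj⟩
      else γ ⟨i, hi⟩ * z ⟨i, hi⟩
    else
      if hj : (j : ℕ) < K then (phat n)⁻¹ * ∑ k, C n k * (γ k * V k ⟨j, hj⟩)
      else (phat n)⁻¹ * ∑ k, C n k * (γ k * z k)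

/-- `pbar` is a max-min SIR-balanced power vector: it maximizes
`p ↦ min_k SIR_k(p)/γ_k` over the set `P`. -/
def MaxMinBalanced {K N : ℕ} (V : Matrix (Fin K) (Fin K) ℝ) (z : Fin K → ℝ)
    (γ : Fin K → ℝ) (C : Matrix (Fin N) (Fin K) ℝ) (phat : Fin N → ℝ)
    (pbar : Fin K → ℝ) : Prop :=
  pbar ∈ Pset C phat ∧
    ∀ p ∈ Pset C phat, (⨅ k, SIR V z p k / γ k) ≤ ⨅ k, SIR V z pbar k / γ k

/-- The set `N₀(p)` of active power constraints. -/
def activeSet {K N : ℕ} (C : Matrix (Fin N) (Fin K) ℝ) (phat : Fin N → ℝ)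
    (p : Fin K → ℝ) : Set (Fin N) :=
  {n | gcon C phat n p = 1 ∧ ∀ m, gcon C phat m p ≤ gcon C phat n p}

/-- The (relatively open) probability simplex `Π⁺_K`. -/
def PosSimplex (K : ℕ) : Set (Fin K → ℝ) :=
  {w | (∀ k, 0 < w k) ∧ ∑ k, w k = 1}

/-- The feasible QoS region `F`. -/
def QoSRegion {K N : ℕ} (V : Matrix (Fin K) (Fin K) ℝ) (z : Fin K → ℝ)
    (γ : Fin K → ℝ) (C : Matrix (Fin N) (Fin K) ℝ) (phat : Fin N → ℝ)
    (φ : ℝ → ℝ) : Set (Fin K → ℝ) :=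
  {q | ∃ p ∈ Pplus C phat, ∀ k, q k = φ (SIR V z p k / γ k)}


namespace Stmt11Aux
open Finset

variable {K : ℕ}

/-- iterated application of `M` -/
def iter (M : Matrix (Fin K) (Fin K) ℝ) (q : Fin K → ℝ) : ℕ → (Fin K → ℝ)
  | 0 => q
  | (m+1) => M.mulVec (iter M q m)

lemma mulVec_nonneg {M : Matrix (Fin K) (Fin K) ℝ} (hM : ∀ i j, 0 ≤ M i j)
    {q : Fin K → ℝ} (hq : ∀ k, 0 ≤ q k) : ∀ k, 0 ≤ M.mulVec q k := by
  intro k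
  rw [Matrix.mulVec, dotProduct]
  exact Finset.sum_nonneg fun j _ => mul_nonneg (hM k j) (hq j)

lemma iter_nonneg {M : Matrix (Fin K) (Fin K) ℝ} (hM : ∀ i j, 0 ≤ M i j)
    {q : Fin K → ℝ} (hq : ∀ k, 0 ≤ q k) : ∀ m k, 0 ≤ iter M q m k := by
  intro m
  induction m with
  | zero => exact hq
  | succ m ih => exact mulVec_nonneg hM ih

lemma sum_iter_pos {M : Matrix (Fin K) (Fin K) ℝ} (hM : ∀ i j, 0 ≤ M i j)
    (hirr : MatIrred M) {q : Fin K → ℝ} (hq : ∀ k, 0 ≤ q k) (hq0 : q ≠ 0) :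
    ∀ i, 0 < ∑ m ∈ Finset.range K, iter M q m i := by
  classical
  -- support sets
  set S : ℕ → Finset (Fin K) :=
    fun m => Finset.univ.filter (fun i => ∃ m' ≤ m, 0 < iter M q m' i) with hS
  have hmemS : ∀ m i, i ∈ S m ↔ ∃ m' ≤ m, 0 < iter M q m' i := by
    intro m i; simp [hS]
  have hmono : ∀ m, S m ⊆ S (m+1) := by
    intro m i hi
    rcases (hmemS m i).1 hi with ⟨m', hm', hpos⟩
    exact (hmemS (m+1) i).2 ⟨m', le_trans hm' (Nat.le_succ m), hpos⟩
  obtain ⟨k0, hk0⟩ : ∃ k, 0 < q k := by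
    by_contra h
    push_neg at h
    exact hq0 (funext fun k => le_antisymm (h k) (hq k))
  have hS0 : ∀ m, k0 ∈ S m := fun m => (hmemS m k0).2 ⟨0, Nat.zero_le _, hk0⟩
  have hgrow : ∀ m, S m ≠ Finset.univ → ∃ i, i ∉ S m ∧ i ∈ S (m+1) := by
    intro m hne
    obtain ⟨i0, hi0⟩ : ∃ i, i ∉ S m := by
      by_contra h
      push_neg at h
      exact hne (Finset.eq_univ_iff_forall.2 h)
    have hSetne : (↑(S m)ᶜ : Set (Fin K)).Nonempty := ⟨i0, by simpa using hi0⟩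
    have hSetnu : (↑(S m)ᶜ : Set (Fin K)) ≠ Set.univ := by
      intro h
      have : k0 ∈ (↑(S m)ᶜ : Set (Fin K)) := h ▸ Set.mem_univ k0
      simp only [Finset.coe_compl, Set.mem_compl_iff, Finset.mem_coe] at this
      exact this (hS0 m)
    rcases hirr _ hSetne hSetnu with ⟨i, hi, j, hj, hij⟩
    simp only [Finset.coe_compl, Set.mem_compl_iff, Finset.mem_coe] at hi hj
    push_neg at hj
    rcases (hmemS m j).1 hj with ⟨m', hm', hjpos⟩
    refine ⟨i, hi, (hmemS (m+1) i).2 ⟨m'+1, Nat.succ_le_succ hm', ?_⟩⟩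
    have : 0 < M i j * iter M q m' j := mul_pos hij hjpos
    calc (0:ℝ) < M i j * iter M q m' j := this
      _ ≤ ∑ l, M i l * iter M q m' l := by
          exact Finset.single_le_sum
            (fun l _ => mul_nonneg (hM i l) (iter_nonneg hM hq m' l)) (Finset.mem_univ j)
  have hcard : ∀ m, S m = Finset.univ ∨ m + 1 ≤ (S m).card := by
    intro m
    induction m with
    | zero =>
      right
      exact Finset.card_pos.2 ⟨k0, hS0 0⟩
    | succ m ih =>
      rcases ih with h | h
      · left
        exact Finset.eq_univ_iff_forall.2 fun i => hmono m (h ▸ Finset.mem_univ i)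
      · by_cases hu : S m = Finset.univ
        · left
          exact Finset.eq_univ_iff_forall.2 fun i => hmono m (hu ▸ Finset.mem_univ i)
        · rcases hgrow m hu with ⟨i, hni, hi⟩
          right
          have hss : S m ⊂ S (m+1) := ⟨hmono m, fun hsub => hni (hsub hi)⟩
          have := Finset.card_lt_card hss
          omega
  intro i
  have hKuniv : S (K-1) = Finset.univ := by
    rcases hcard (K-1) with h | h
    · exact h
    · apply Finset.eq_univ_of_card
      have hle : (S (K-1)).card ≤ K := by
        simpa using Finset.card_le_card (Finset.subset_univ (S (K-1)))
      have hK1 : 1 ≤ K := i.pos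
      rw [Fintype.card_fin]
      omega
  have hi : i ∈ S (K-1) := hKuniv ▸ Finset.mem_univ i
  rcases (hmemS _ i).1 hi with ⟨m', hm', hpos⟩
  have hK1 : 1 ≤ K := i.pos
  have hm'K : m' ∈ Finset.range K := Finset.mem_range.2 (by omega)
  calc (0:ℝ) < iter M q m' i := hpos
    _ ≤ ∑ m ∈ Finset.range K, iter M q m i :=
      Finset.single_le_sum (fun m _ => iter_nonneg hM hq m i) hm'K


lemma perron_aux (hK : 2 ≤ K) (M : Matrix (Fin K) (Fin K) ℝ)
    (hM : ∀ i j, 0 ≤ M i j) (hirr : MatIrred M) :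
    ∃ x : Fin K → ℝ, (∀ k, 0 < x k) ∧ M.mulVec x = specRad M • x ∧ 0 < specRad M ∧
      ∀ (lam : ℝ) (y : Fin K → ℝ), (∀ k, 0 ≤ y k) → y ≠ 0 →
        (∀ k, lam * y k ≤ M.mulVec y k) → lam ≤ specRad M := by
  classical
  have hK0 : (0:ℕ) < K := by omega
  have hKne : (K:ℝ) ≠ 0 := Nat.cast_ne_zero.2 (by omega)
  -- the compact constraint set
  set E : Set (ℝ × (Fin K → ℝ)) :=
    {p | 0 ≤ p.1 ∧ (∀ k, 0 ≤ p.2 k) ∧ (∑ k, p.2 k) = 1 ∧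
      ∀ k, p.1 * p.2 k ≤ M.mulVec p.2 k} with hE
  have hmemE : ∀ p : ℝ × (Fin K → ℝ), p ∈ E ↔ (0 ≤ p.1 ∧ (∀ k, 0 ≤ p.2 k) ∧
      (∑ k, p.2 k) = 1 ∧ ∀ k, p.1 * p.2 k ≤ M.mulVec p.2 k) := fun p => Iff.rfl
  have hcont : ∀ k, Continuous (fun p : ℝ × (Fin K → ℝ) => M.mulVec p.2 k) := by
    intro k
    have : (fun p : ℝ × (Fin K → ℝ) => M.mulVec p.2 k)
        = fun p => ∑ j, M k j * p.2 j := by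
      funext p; rw [Matrix.mulVec, dotProduct]
    rw [this]
    exact continuous_finset_sum _ fun j _ =>
      (continuous_const.mul ((continuous_apply j).comp continuous_snd))
  have hclosed : IsClosed E := by
    have h1 : IsClosed {p : ℝ × (Fin K → ℝ) | 0 ≤ p.1} :=
      isClosed_le continuous_const continuous_fst
    have h2 : IsClosed {p : ℝ × (Fin K → ℝ) | ∀ k, 0 ≤ p.2 k} := by
      have : {p : ℝ × (Fin K → ℝ) | ∀ k, 0 ≤ p.2 k}
          = ⋂ k, {p : ℝ × (Fin K → ℝ) | 0 ≤ p.2 k} := by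
        ext p; simp
      rw [this]
      exact isClosed_iInter fun k =>
        isClosed_le continuous_const ((continuous_apply k).comp continuous_snd)
    have h3 : IsClosed {p : ℝ × (Fin K → ℝ) | (∑ k, p.2 k) = 1} :=
      isClosed_eq (continuous_finset_sum _ fun j _ =>
        (continuous_apply j).comp continuous_snd) continuous_const
    have h4 : IsClosed {p : ℝ × (Fin K → ℝ) | ∀ k, p.1 * p.2 k ≤ M.mulVec p.2 k} := by
      have : {p : ℝ × (Fin K → ℝ) | ∀ k, p.1 * p.2 k ≤ M.mulVec p.2 k}
          = ⋂ k, {p : ℝ × (Fin K → ℝ) | p.1 * p.2 k ≤ M.mulVec p.2 k} := by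
        ext p; simp
      rw [this]
      exact isClosed_iInter fun k =>
        isClosed_le (continuous_fst.mul ((continuous_apply k).comp continuous_snd))
          (hcont k)
    have : E = {p : ℝ × (Fin K → ℝ) | 0 ≤ p.1} ∩ ({p | ∀ k, 0 ≤ p.2 k} ∩
        ({p | (∑ k, p.2 k) = 1} ∩ {p | ∀ k, p.1 * p.2 k ≤ M.mulVec p.2 k})) := by
      ext p
      simp only [hE, Set.mem_setOf_eq, Set.mem_inter_iff]
      try tauto
    rw [this]
    exact h1.inter (h2.inter (h3.inter h4))
  set B : ℝ := ∑ i, ∑ j, M i j with hB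
  have hsub : E ⊆ Set.Icc (0:ℝ) B ×ˢ Set.Icc (0 : Fin K → ℝ) 1 := by
    rintro ⟨lam, x⟩ ⟨h1, h2, h3, h4⟩
    have hxle1 : ∀ k, x k ≤ 1 := by
      intro k
      calc x k ≤ ∑ j, x j := Finset.single_le_sum (fun j _ => h2 j) (Finset.mem_univ k)
        _ = 1 := h3
    constructor
    · refine ⟨h1, ?_⟩
      have : lam = ∑ k, lam * x k := by
        rw [← Finset.mul_sum, h3, mul_one]
      rw [this]
      calc ∑ k, lam * x k ≤ ∑ k, M.mulVec x k := Finset.sum_le_sum fun k _ => h4 k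
        _ = ∑ k, ∑ j, M k j * x j := by
            refine Finset.sum_congr rfl fun k _ => ?_
            rw [Matrix.mulVec, dotProduct]
        _ ≤ ∑ k, ∑ j, M k j := by
            refine Finset.sum_le_sum fun k _ => Finset.sum_le_sum fun j _ => ?_
            calc M k j * x j ≤ M k j * 1 :=
              mul_le_mul_of_nonneg_left (hxle1 j) (hM k j)
              _ = M k j := mul_one _
    · exact ⟨fun k => h2 k, fun k => hxle1 k⟩
  have hEcompact : IsCompact E :=
    IsCompact.of_isClosed_subset (isCompact_Icc.prod isCompact_Icc) hclosed hsub
  have hunif : ((0:ℝ), fun _ : Fin K => (K:ℝ)⁻¹) ∈ E := by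
    refine ⟨le_refl 0, fun k => by positivity, ?_, fun k => ?_⟩
    · rw [Finset.sum_const, Finset.card_univ, Fintype.card_fin, nsmul_eq_mul]
      exact mul_inv_cancel₀ hKne
    · have := mulVec_nonneg hM (q := fun _ : Fin K => (K:ℝ)⁻¹)
        (fun _ => by positivity) k
      simpa using this
  have hEne : E.Nonempty := ⟨_, hunif⟩
  have hFcompact : IsCompact (Prod.fst '' E) := hEcompact.image continuous_fst
  have hFne : (Prod.fst '' E).Nonempty := hEne.image _
  have hFbdd : BddAbove (Prod.fst '' E) := hFcompact.bddAbove
  set r : ℝ := sSup (Prod.fst '' E) with hr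
  have hrmem : r ∈ Prod.fst '' E := hFcompact.sSup_mem hFne
  obtain ⟨⟨r', x⟩, hrxE, hfst⟩ := hrmem
  simp only at hfst
  subst hfst
  obtain ⟨hr0, hx, hsum, hrx⟩ := hrxE
  replace hr0 : 0 ≤ r := hr0
  replace hx : ∀ k, 0 ≤ x k := hx
  replace hsum : (∑ k, x k) = 1 := hsum
  replace hrx : ∀ k, r * x k ≤ M.mulVec x k := hrx
  -- Collatz-Wielandt sup property
  have cwsup : ∀ (lam : ℝ) (y : Fin K → ℝ), (∀ k, 0 ≤ y k) → y ≠ 0 →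
      (∀ k, lam * y k ≤ M.mulVec y k) → lam ≤ r := by
    intro lam y hy hy0 hle
    rcases le_or_gt lam 0 with h | h
    · refine h.trans (le_csSup hFbdd ⟨_, hunif, rfl⟩)
    · obtain ⟨k1, hk1⟩ : ∃ k, 0 < y k := by
        by_contra hcon
        push_neg at hcon
        exact hy0 (funext fun k => le_antisymm (hcon k) (hy k))
      have hs : 0 < ∑ k, y k :=
        lt_of_lt_of_le hk1 (Finset.single_le_sum (fun j _ => hy j) (Finset.mem_univ k1))
      set s := ∑ k, y k with hsdef
      have hmem : (lam, s⁻¹ • y) ∈ E := by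
        refine ⟨le_of_lt h, fun k => by
          simp only [Pi.smul_apply, smul_eq_mul]
          exact mul_nonneg (inv_nonneg.2 hs.le) (hy k), ?_, fun k => ?_⟩
        · simp only [Pi.smul_apply, smul_eq_mul]
          rw [← Finset.mul_sum, ← hsdef, inv_mul_cancel₀ (ne_of_gt hs)]
        · rw [Matrix.mulVec_smul]
          simp only [Pi.smul_apply, smul_eq_mul]
          rw [mul_left_comm]
          exact mul_le_mul_of_nonneg_left (hle k) (by positivity)
      exact le_csSup hFbdd ⟨_, hmem, rfl⟩
  have hx0 : x ≠ 0 := by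
    intro h
    rw [h] at hsum
    simp at hsum
  -- equality M x = r x
  have heig : M.mulVec x = r • x := by
    by_contra hne
    set w : Fin K → ℝ := M.mulVec x - r • x with hw
    have hwnn : ∀ k, 0 ≤ w k := fun k => by
      simp only [hw, Pi.sub_apply, Pi.smul_apply, smul_eq_mul, sub_nonneg]
      exact hrx k
    have hw0 : w ≠ 0 := fun h => hne (by
      have := sub_eq_zero.1 h
      exact this)
    set u : Fin K → ℝ := fun i => ∑ m ∈ Finset.range K, iter M x m i with hu
    set sv : Fin K → ℝ := fun i => ∑ m ∈ Finset.range K, iter M w m i with hsv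
    have upos : ∀ i, 0 < u i := sum_iter_pos hM hirr hx hx0
    have spos : ∀ i, 0 < sv i := sum_iter_pos hM hirr hwnn hw0
    have hit : ∀ m, iter M w m = M.mulVec (iter M x m) - r • iter M x m := by
      intro m
      induction m with
      | zero => exact hw
      | succ m ih =>
        show M.mulVec (iter M w m) = _
        rw [ih, Matrix.mulVec_sub, Matrix.mulVec_smul]
        rfl
    have hMu : ∀ i, M.mulVec u i = r * u i + sv i := by
      intro i
      have h1 : M.mulVec u i = ∑ m ∈ Finset.range K, M.mulVec (iter M x m) i := by
        rw [Matrix.mulVec, dotProduct]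
        simp only [hu, Finset.mul_sum]
        rw [Finset.sum_comm]
        refine Finset.sum_congr rfl fun m _ => ?_
        rw [Matrix.mulVec, dotProduct]
      have h2 : ∀ m, M.mulVec (iter M x m) i = r * iter M x m i + iter M w m i := by
        intro m
        have h := congrFun (hit m) i
        simp only [Pi.sub_apply, Pi.smul_apply, smul_eq_mul] at h
        linarith
      calc M.mulVec u i = ∑ m ∈ Finset.range K, M.mulVec (iter M x m) i := h1
        _ = ∑ m ∈ Finset.range K, (r * iter M x m i + iter M w m i) :=
            Finset.sum_congr rfl fun m _ => h2 m
        _ = r * u i + sv i := by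
            rw [Finset.sum_add_distrib, ← Finset.mul_sum]
    obtain ⟨i0, -, hi0⟩ := Finset.exists_min_image Finset.univ (fun i => sv i / u i)
      ⟨⟨0, hK0⟩, Finset.mem_univ _⟩
    set ε := sv i0 / u i0 with hεdef
    have hε : 0 < ε := div_pos (spos i0) (upos i0)
    have hu0 : u ≠ 0 := fun h => (upos i0).ne' (by simpa using congrFun h i0)
    have hclaim : ∀ k, (r + ε) * u k ≤ M.mulVec u k := by
      intro k
      have h3 : ε * u k ≤ sv k := by
        have h4 := hi0 k (Finset.mem_univ k)
        calc ε * u k ≤ (sv k / u k) * u k :=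
              mul_le_mul_of_nonneg_right h4 (upos k).le
          _ = sv k := div_mul_cancel₀ _ (ne_of_gt (upos k))
      have hexp : (r + ε) * u k = r * u k + ε * u k := by ring
      rw [hexp, hMu k]
      linarith
    have := cwsup (r + ε) u (fun k => (upos k).le) hu0 hclaim
    linarith
  -- positivity of x
  have hit2 : ∀ m, iter M x m = r ^ m • x := by
    intro m
    induction m with
    | zero => simp [iter]
    | succ m ih =>
      show M.mulVec (iter M x m) = _
      rw [ih, Matrix.mulVec_smul, heig, smul_smul, pow_succ, mul_comm]
  have upos : ∀ i, 0 < ∑ m ∈ Finset.range K, iter M x m i :=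
    sum_iter_pos hM hirr hx hx0
  have hgeom : 0 < ∑ m ∈ Finset.range K, r ^ m := by
    have h0 : (0:ℕ) ∈ Finset.range K := Finset.mem_range.2 hK0
    have : (1:ℝ) ≤ ∑ m ∈ Finset.range K, r ^ m := by
      calc (1:ℝ) = r ^ 0 := (pow_zero r).symm
        _ ≤ ∑ m ∈ Finset.range K, r ^ m :=
          Finset.single_le_sum (fun m _ => pow_nonneg hr0 m) h0
    linarith
  have xpos : ∀ k, 0 < x k := by
    intro k
    have h1 : (∑ m ∈ Finset.range K, r ^ m) * x k > 0 := by
      have := upos k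
      calc (0:ℝ) < ∑ m ∈ Finset.range K, iter M x m k := this
        _ = ∑ m ∈ Finset.range K, r ^ m * x k := by
            refine Finset.sum_congr rfl fun m _ => ?_
            rw [hit2 m]; rfl
        _ = (∑ m ∈ Finset.range K, r ^ m) * x k := by rw [Finset.sum_mul]
    by_contra hxk
    push_neg at hxk
    nlinarith
  -- positivity of r
  have rpos : 0 < r := by
    rcases lt_or_eq_of_le hr0 with h | h
    · exact h
    · exfalso
      have hMx0 : M.mulVec x = 0 := by
        rw [heig, ← h, zero_smul]
      have hi1 : ({(⟨0, hK0⟩ : Fin K)} : Set (Fin K)) ≠ Set.univ := by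
        intro hcon
        have h2 : (⟨1, by omega⟩ : Fin K) ∈ ({(⟨0, hK0⟩ : Fin K)} : Set (Fin K)) :=
          hcon ▸ Set.mem_univ _
        simp only [Set.mem_singleton_iff, Fin.mk.injEq] at h2
        omega
      rcases hirr {(⟨0, hK0⟩ : Fin K)} ⟨_, rfl⟩ hi1 with ⟨a, ha, b, hb, hab⟩
      have h3 : 0 < M.mulVec x a := by
        rw [Matrix.mulVec, dotProduct]
        have : 0 < M a b * x b := mul_pos hab (xpos b)
        calc (0:ℝ) < M a b * x b := this
          _ ≤ ∑ j, M a j * x j := Finset.single_le_sum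
              (fun j _ => mul_nonneg (hM a j) (xpos j).le) (Finset.mem_univ b)
      rw [hMx0] at h3
      simp at h3
  -- specRad M = r
  have hspec : specRad M = r := by
    set A := M.map (fun t : ℝ => (t : ℂ)) with hA
    have hAmv : ∀ y : Fin K → ℝ,
        A.mulVec (fun k => (y k : ℂ)) = fun k => ((M.mulVec y k : ℝ) : ℂ) := by
      intro y
      funext k
      rw [Matrix.mulVec, dotProduct, Matrix.mulVec, dotProduct]
      push_cast
      rfl
    have hdiagmv : ∀ (c : ℂ) (v : Fin K → ℂ),
        ((algebraMap ℂ (Matrix (Fin K) (Fin K) ℂ)) c).mulVec v = fun k => c * v k := by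
      intro c v
      funext k
      rw [Matrix.mulVec, dotProduct]
      simp [Matrix.algebraMap_matrix_apply, ite_mul]
    have hmemspec : (r : ℂ) ∈ spectrum ℂ A := by
      rw [spectrum.mem_iff]
      intro hunit
      rw [Matrix.isUnit_iff_isUnit_det, isUnit_iff_ne_zero] at hunit
      apply hunit
      rw [← Matrix.exists_mulVec_eq_zero_iff]
      refine ⟨fun k => (x k : ℂ), ?_, ?_⟩
      · intro hcon
        have := congrFun hcon ⟨0, hK0⟩
        simp only [Pi.zero_apply, Complex.ofReal_eq_zero] at this
        exact (xpos _).ne' this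
      · rw [Matrix.sub_mulVec, hdiagmv, hAmv]
        funext k
        simp only [Pi.sub_apply, Pi.zero_apply]
        have h5 := congrFun heig k
        simp only [Pi.smul_apply, smul_eq_mul] at h5
        rw [h5]
        push_cast
        ring
    have hub : ∀ c ∈ (fun w : ℂ => ‖w‖) '' spectrum ℂ A, c ≤ r := by
      rintro c ⟨lam, hlam, rfl⟩
      rw [spectrum.mem_iff] at hlam
      rw [Matrix.isUnit_iff_isUnit_det, isUnit_iff_ne_zero, not_not,
        ← Matrix.exists_mulVec_eq_zero_iff] at hlam
      obtain ⟨v, hv0, hveq⟩ := hlam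
      rw [Matrix.sub_mulVec, hdiagmv, sub_eq_zero] at hveq
      have hveq' : ∀ k, A.mulVec v k = lam * v k := fun k => (congrFun hveq k).symm
      set y : Fin K → ℝ := fun k => ‖v k‖ with hy
      have hy0 : y ≠ 0 := by
        intro hcon
        apply hv0
        funext k
        have := congrFun hcon k
        simp only [hy, Pi.zero_apply, map_eq_zero] at this
        simpa using this
      have hynn : ∀ k, 0 ≤ y k := fun k => norm_nonneg _
      have hkey : ∀ k, ‖lam‖ * y k ≤ M.mulVec y k := by
        intro k
        have h1 : ‖lam‖ * y k = ‖A.mulVec v k‖ := by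
          rw [hveq' k, norm_mul]
        rw [h1, Matrix.mulVec, dotProduct, Matrix.mulVec, dotProduct]
        calc ‖∑ j, A k j * v j‖ ≤ ∑ j, ‖A k j * v j‖ :=
              norm_sum_le _ _
          _ = ∑ j, M k j * y j := by
              refine Finset.sum_congr rfl fun j _ => ?_
              rw [norm_mul]
              simp only [hA, Matrix.map_apply, Complex.norm_real, Real.norm_eq_abs]
              rw [abs_of_nonneg (hM k j)]
      exact cwsup _ y hynn hy0 hkey
    have hbdd : BddAbove ((fun w : ℂ => ‖w‖) '' spectrum ℂ A) := ⟨r, fun c hc => hub c hc⟩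
    have hrin : r ∈ (fun w : ℂ => ‖w‖) '' spectrum ℂ A :=
      ⟨(r : ℂ), hmemspec, by show ‖(r:ℂ)‖ = r; rw [Complex.norm_real, Real.norm_eq_abs, abs_of_nonneg hr0]⟩
    refine le_antisymm (Real.sSup_le hub hr0) (le_csSup hbdd hrin)
  exact ⟨x, xpos, by rw [hspec]; exact heig, by rw [hspec]; exact rpos,
    fun lam y h1 h2 h3 => by rw [hspec]; exact cwsup lam y h1 h2 h3⟩

lemma irred_transpose {M : Matrix (Fin K) (Fin K) ℝ} (hirr : MatIrred M) :
    MatIrred Mᵀ := by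
  intro S hS1 hS2
  have hc1 : (Sᶜ : Set (Fin K)).Nonempty := by
    rcases Set.ne_univ_iff_exists_notMem S |>.1 hS2 with ⟨i, hi⟩
    exact ⟨i, hi⟩
  have hc2 : (Sᶜ : Set (Fin K)) ≠ Set.univ := by
    intro h
    rcases hS1 with ⟨j, hj⟩
    have : j ∈ (Sᶜ : Set (Fin K)) := h ▸ Set.mem_univ j
    exact this hj
  rcases hirr Sᶜ hc1 hc2 with ⟨a, ha, b, hb, hab⟩
  have hbS : b ∈ S := not_not.1 hb
  exact ⟨b, hbS, a, ha, by rwa [Matrix.transpose_apply]⟩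

lemma specRad_transpose (M : Matrix (Fin K) (Fin K) ℝ) :
    specRad Mᵀ = specRad M := by
  have hsp : spectrum ℂ ((Mᵀ).map fun x => (x:ℂ)) = spectrum ℂ (M.map fun x => (x:ℂ)) := by
    rw [Matrix.transpose_map]
    ext lam
    rw [spectrum.mem_iff, spectrum.mem_iff, Matrix.isUnit_iff_isUnit_det,
      Matrix.isUnit_iff_isUnit_det]
    have halg : (algebraMap ℂ (Matrix (Fin K) (Fin K) ℂ) lam)ᵀ
      = algebraMap ℂ (Matrix (Fin K) (Fin K) ℂ) lam := by
      ext i j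
      simp only [Matrix.transpose_apply, Matrix.algebraMap_matrix_apply]
      by_cases h : i = j
      · subst h; simp
      · rw [if_neg h, if_neg (Ne.symm h)]
    have heq : algebraMap ℂ (Matrix (Fin K) (Fin K) ℂ) lam - (M.map fun x => (x:ℂ))ᵀ
        = (algebraMap ℂ (Matrix (Fin K) (Fin K) ℂ) lam - M.map fun x => (x:ℂ))ᵀ := by
      rw [Matrix.transpose_sub, halg]
    rw [heq, Matrix.det_transpose]
  unfold specRad
  rw [hsp]

lemma pairing (M : Matrix (Fin K) (Fin K) ℝ) (v y : Fin K → ℝ) :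
    ∑ k, v k * M.mulVec y k = ∑ j, Mᵀ.mulVec v j * y j := by
  simp only [Matrix.mulVec, dotProduct, Finset.mul_sum, Finset.sum_mul]
  rw [Finset.sum_comm]
  refine Finset.sum_congr rfl fun j _ => Finset.sum_congr rfl fun k _ => ?_
  rw [Matrix.transpose_apply]
  ring

lemma dot_pos {v y : Fin K → ℝ} (hv : ∀ k, 0 < v k) (hy : ∀ k, 0 ≤ y k)
    (hy0 : y ≠ 0) : 0 < ∑ k, v k * y k := by
  obtain ⟨k1, hk1⟩ : ∃ k, 0 < y k := by
    by_contra h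
    push_neg at h
    exact hy0 (funext fun k => le_antisymm (h k) (hy k))
  calc (0:ℝ) < v k1 * y k1 := mul_pos (hv k1) hk1
    _ ≤ ∑ k, v k * y k := Finset.single_le_sum
        (fun k _ => mul_nonneg (hv k).le (hy k)) (Finset.mem_univ k1)

section CW
variable (hK : 2 ≤ K) {M : Matrix (Fin K) (Fin K) ℝ}
  (hM : ∀ i j, 0 ≤ M i j) (hirr : MatIrred M)

include hK hM hirr

lemma cw_ge {lam : ℝ} {y : Fin K → ℝ} (hy : ∀ k, 0 ≤ y k) (hy0 : y ≠ 0)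
    (h : ∀ k, lam * y k ≤ M.mulVec y k) : lam ≤ specRad M := by
  obtain ⟨x, -, -, -, hcw⟩ := perron_aux hK M hM hirr
  exact hcw lam y hy hy0 h

lemma specRad_pos : 0 < specRad M := by
  obtain ⟨x, -, -, h, -⟩ := perron_aux hK M hM hirr
  exact h

lemma cw_le {lam : ℝ} {y : Fin K → ℝ} (hy : ∀ k, 0 ≤ y k) (hy0 : y ≠ 0)
    (h : ∀ k, M.mulVec y k ≤ lam * y k) : specRad M ≤ lam := by
  obtain ⟨v, hv, hveig, -, -⟩ := perron_aux hK Mᵀ (fun i j => hM j i) (irred_transpose hirr)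
  have hS : 0 < ∑ k, v k * y k := dot_pos hv hy hy0
  have h1 : specRad Mᵀ * ∑ k, v k * y k ≤ lam * ∑ k, v k * y k := by
    calc specRad Mᵀ * ∑ k, v k * y k = ∑ j, Mᵀ.mulVec v j * y j := by
          rw [hveig]
          simp only [Pi.smul_apply, smul_eq_mul, Finset.mul_sum]
          exact Finset.sum_congr rfl fun j _ => by ring
      _ = ∑ k, v k * M.mulVec y k := (pairing M v y).symm
      _ ≤ ∑ k, v k * (lam * y k) := Finset.sum_le_sum fun k _ =>
          mul_le_mul_of_nonneg_left (h k) (hv k).le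
      _ = lam * ∑ k, v k * y k := by
          rw [Finset.mul_sum]
          exact Finset.sum_congr rfl fun k _ => by ring
  have h2 := le_of_mul_le_mul_right h1 hS
  rwa [specRad_transpose] at h2

lemma cw_lt_of_lt {lam : ℝ} {y : Fin K → ℝ} (hy : ∀ k, 0 ≤ y k) (hy0 : y ≠ 0)
    (h : ∀ k, M.mulVec y k ≤ lam * y k) (hst : ∃ k, M.mulVec y k < lam * y k) :
    specRad M < lam := by
  obtain ⟨v, hv, hveig, -, -⟩ := perron_aux hK Mᵀ (fun i j => hM j i) (irred_transpose hirr)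
  have hS : 0 < ∑ k, v k * y k := dot_pos hv hy hy0
  obtain ⟨k0, hk0⟩ := hst
  have h1 : specRad Mᵀ * ∑ k, v k * y k < lam * ∑ k, v k * y k := by
    calc specRad Mᵀ * ∑ k, v k * y k = ∑ k, v k * M.mulVec y k := by
          rw [pairing M v y, hveig]
          simp only [Pi.smul_apply, smul_eq_mul, Finset.mul_sum]
          exact Finset.sum_congr rfl fun j _ => by ring
      _ < ∑ k, v k * (lam * y k) := by
          refine Finset.sum_lt_sum (fun k _ => mul_le_mul_of_nonneg_left (h k) (hv k).le)
            ⟨k0, Finset.mem_univ k0, mul_lt_mul_of_pos_left hk0 (hv k0)⟩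
      _ = lam * ∑ k, v k * y k := by
          rw [Finset.mul_sum]
          exact Finset.sum_congr rfl fun k _ => by ring
  have h2 := lt_of_mul_lt_mul_right h1 hS.le
  rwa [specRad_transpose] at h2

lemma cw_gt_of_lt {lam : ℝ} {y : Fin K → ℝ} (hy : ∀ k, 0 ≤ y k) (hy0 : y ≠ 0)
    (h : ∀ k, lam * y k ≤ M.mulVec y k) (hst : ∃ k, lam * y k < M.mulVec y k) :
    lam < specRad M := by
  obtain ⟨v, hv, hveig, -, -⟩ := perron_aux hK Mᵀ (fun i j => hM j i) (irred_transpose hirr)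
  have hS : 0 < ∑ k, v k * y k := dot_pos hv hy hy0
  obtain ⟨k0, hk0⟩ := hst
  have h1 : lam * ∑ k, v k * y k < specRad Mᵀ * ∑ k, v k * y k := by
    calc lam * ∑ k, v k * y k = ∑ k, v k * (lam * y k) := by
          rw [Finset.mul_sum]
          exact Finset.sum_congr rfl fun k _ => by ring
      _ < ∑ k, v k * M.mulVec y k := by
          refine Finset.sum_lt_sum (fun k _ => mul_le_mul_of_nonneg_left (h k) (hv k).le)
            ⟨k0, Finset.mem_univ k0, mul_lt_mul_of_pos_left hk0 (hv k0)⟩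
      _ = specRad Mᵀ * ∑ k, v k * y k := by
          rw [pairing M v y, hveig]
          simp only [Pi.smul_apply, smul_eq_mul, Finset.mul_sum]
          exact Finset.sum_congr rfl fun j _ => by ring
  have h2 := lt_of_mul_lt_mul_right h1 hS.le
  rwa [specRad_transpose] at h2

end CW

lemma specRad_lt_of_le_of_lt (hK : 2 ≤ K) {M M' : Matrix (Fin K) (Fin K) ℝ}
    (hM : ∀ i j, 0 ≤ M i j) (hirr : MatIrred M)
    (hle : ∀ i j, M i j ≤ M' i j) (hst : ∃ i j, M i j < M' i j) :
    specRad M < specRad M' := by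
  have hM' : ∀ i j, 0 ≤ M' i j := fun i j => le_trans (hM i j) (hle i j)
  have hirr' : MatIrred M' := by
    intro S h1 h2
    rcases hirr S h1 h2 with ⟨i, hi, j, hj, hij⟩
    exact ⟨i, hi, j, hj, lt_of_lt_of_le hij (hle i j)⟩
  obtain ⟨x, hx, heig, hr, -⟩ := perron_aux hK M hM hirr
  obtain ⟨i0, j0, hij0⟩ := hst
  apply cw_gt_of_lt hK hM' hirr' (fun k => (hx k).le)
    (fun h => (hx i0).ne' (by simpa using congrFun h i0))
  · intro k
    have h1 : specRad M * x k = M.mulVec x k := by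
      have := congrFun heig k
      simp only [Pi.smul_apply, smul_eq_mul] at this
      exact this.symm
    rw [h1, Matrix.mulVec, Matrix.mulVec, dotProduct, dotProduct]
    exact Finset.sum_le_sum fun j _ => mul_le_mul_of_nonneg_right (hle k j) (hx j).le
  · refine ⟨i0, ?_⟩
    have h1 : specRad M * x i0 = M.mulVec x i0 := by
      have := congrFun heig i0
      simp only [Pi.smul_apply, smul_eq_mul] at this
      exact this.symm
    rw [h1, Matrix.mulVec, Matrix.mulVec, dotProduct, dotProduct]
    refine Finset.sum_lt_sum (fun j _ => mul_le_mul_of_nonneg_right (hle i0 j) (hx j).le)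
      ⟨j0, Finset.mem_univ j0, mul_lt_mul_of_pos_right hij0 (hx j0)⟩


/-! ### infimum helpers -/

lemma mulVec_eq {A B : ℕ} (M : Matrix (Fin A) (Fin B) ℝ) (v : Fin B → ℝ) (i : Fin A) :
    M.mulVec v i = ∑ j, M i j * v j := rfl

lemma iInf_le' [Nonempty (Fin K)] (f : Fin K → ℝ) (k : Fin K) : (⨅ j, f j) ≤ f k :=
  ciInf_le (Finite.bddBelow_range f) k

lemma exists_iInf_eq [Nonempty (Fin K)] (f : Fin K → ℝ) :
    ∃ k0, (⨅ j, f j) = f k0 := by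
  obtain ⟨k0, -, hk0⟩ := Finset.exists_min_image Finset.univ f Finset.univ_nonempty
  exact ⟨k0, le_antisymm (iInf_le' f k0) (le_ciInf fun k => hk0 k (Finset.mem_univ k))⟩

/-! ### application basics -/

section App

variable {N : ℕ} (hK : 2 ≤ K) (hN : 1 ≤ N)
    (V : Matrix (Fin K) (Fin K) ℝ) (z γ : Fin K → ℝ)
    (C : Matrix (Fin N) (Fin K) ℝ) (phat : Fin N → ℝ)

lemma Bmat_apply (n : Fin N) (i j : Fin K) :
    Bmat V z γ C phat n i j = γ i * (V i j + (phat n)⁻¹ * (z i * C n j)) := by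
  unfold Bmat
  rw [Matrix.diagonal_mul]
  simp [Matrix.add_apply, Matrix.smul_apply, Matrix.vecMulVec_apply, smul_eq_mul]

variable (hV : ∀ i j, 0 ≤ V i j) (hz : ∀ k, 0 < z k) (hγ : ∀ k, 0 < γ k)
    (hC : ∀ n k, C n k = 0 ∨ C n k = 1) (hphat : ∀ n, 0 < phat n)
    (hirr : MatIrred V)

include hC in
lemma hCnn : ∀ n k, 0 ≤ C n k := by
  intro n k
  rcases hC n k with h | h <;> rw [h] <;> norm_num

include hV hz hγ hC hphat in
lemma Bmat_nonneg (n : Fin N) : ∀ i j, 0 ≤ Bmat V z γ C phat n i j := by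
  intro i j
  rw [Bmat_apply]
  have := hCnn C hC n j
  have h1 : 0 ≤ (phat n)⁻¹ := inv_nonneg.2 (hphat n).le
  have := hz i
  have := hγ i
  have := hV i j
  positivity

include hV hz hγ hC hphat hirr in
lemma Bmat_irred (n : Fin N) : MatIrred (Bmat V z γ C phat n) := by
  intro S h1 h2
  rcases hirr S h1 h2 with ⟨i, hi, j, hj, hij⟩
  refine ⟨i, hi, j, hj, ?_⟩
  rw [Bmat_apply]
  have h3 : 0 ≤ (phat n)⁻¹ * (z i * C n j) :=
    mul_nonneg (inv_nonneg.2 (hphat n).le) (mul_nonneg (hz i).le (hCnn C hC n j))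
  have := hγ i
  nlinarith

lemma Bmat_mulVec (n : Fin N) (p : Fin K → ℝ) (k : Fin K) :
    (Bmat V z γ C phat n).mulVec p k
      = γ k * (V.mulVec p k + (phat n)⁻¹ * (C.mulVec p n) * z k) := by
  rw [mulVec_eq]
  have h1 : ∀ j, Bmat V z γ C phat n k j * p j
      = γ k * (V k j * p j) + (γ k * (phat n)⁻¹ * z k) * (C n j * p j) := by
    intro j
    rw [Bmat_apply]
    ring
  rw [Finset.sum_congr rfl fun j _ => h1 j, Finset.sum_add_distrib,
    ← Finset.mul_sum, ← Finset.mul_sum]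
  rw [mulVec_eq V p k, mulVec_eq C p n]
  ring

include hK hV hz hγ hC hphat hirr in
lemma main_facts (hCcol : ∀ k, ∃ n, C n k = 1) (pbar : Fin K → ℝ)
    (hbal : MaxMinBalanced V z γ C phat pbar) (hN' : 0 < N) :
    ∃ R : ℝ, 0 < R ∧ (∀ m, specRad (Bmat V z γ C phat m) ≤ R) ∧
      (∃ m, specRad (Bmat V z γ C phat m) = R) ∧
      (∀ k, 0 < pbar k) ∧ (∀ k, γ k * (V.mulVec pbar k + z k) = R * pbar k) := by
  haveI : Nonempty (Fin K) := ⟨⟨0, by omega⟩⟩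
  haveI : Nonempty (Fin N) := ⟨⟨0, hN'⟩⟩
  obtain ⟨m0, -, hm0max⟩ := Finset.exists_max_image Finset.univ
    (fun m => specRad (Bmat V z γ C phat m)) Finset.univ_nonempty
  set R := specRad (Bmat V z γ C phat m0) with hRdef
  have hRub : ∀ m, specRad (Bmat V z γ C phat m) ≤ R := fun m => hm0max m (Finset.mem_univ m)
  have hBnn := Bmat_nonneg V z γ C phat hV hz hγ hC hphat
  have hBirr := Bmat_irred V z γ C phat hV hz hγ hC hphat hirr
  have hR0 : 0 < R := specRad_pos hK (hBnn m0) (hBirr m0)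
  obtain ⟨hpnn, hpC⟩ := hbal.1
  have hd : ∀ (p : Fin K → ℝ), (∀ k, 0 ≤ p k) → ∀ k, 0 < V.mulVec p k + z k := by
    intro p hp k
    have h1 : 0 ≤ V.mulVec p k := mulVec_nonneg hV hp k
    linarith [hz k]
  set t := ⨅ k, SIR V z pbar k / γ k with htdef
  -- row m0 of C is nonzero
  obtain ⟨k1, hk1⟩ : ∃ k1, C m0 k1 = 1 := by
    by_contra h
    push_neg at h
    have hrow0 : ∀ k, C m0 k = 0 := fun k => (hC m0 k).resolve_right (h k)
    obtain ⟨m1, hm1⟩ := hCcol ⟨0, by omega⟩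
    have hlt : specRad (Bmat V z γ C phat m0) < specRad (Bmat V z γ C phat m1) := by
      apply specRad_lt_of_le_of_lt hK (hBnn m0) (hBirr m0)
      · intro i j
        rw [Bmat_apply, Bmat_apply, hrow0 j]
        have h3 : 0 ≤ (phat m1)⁻¹ * (z i * C m1 j) := mul_nonneg (inv_nonneg.2 (hphat m1).le)
          (mul_nonneg (hz i).le (hCnn C hC m1 j))
        have := hγ i
        nlinarith
      · refine ⟨⟨0, by omega⟩, ⟨0, by omega⟩, ?_⟩
        rw [Bmat_apply, Bmat_apply, hrow0 _, hm1]
        have h4 : 0 < (phat m1)⁻¹ * (z ⟨0, by omega⟩ * 1) :=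
          mul_pos (inv_pos.2 (hphat m1)) (by simpa using hz ⟨0, by omega⟩)
        have := hγ (⟨0, by omega⟩ : Fin K)
        nlinarith
    exact absurd (hRub m1) (not_le.2 hlt)
  -- Perron vector of B(m0), scaled to meet constraint m0 with equality
  obtain ⟨x0, hx0pos, hx0eig, -, -⟩ := perron_aux hK _ (hBnn m0) (hBirr m0)
  have hCx0 : 0 < C.mulVec x0 m0 := by
    rw [mulVec_eq]
    calc (0:ℝ) < C m0 k1 * x0 k1 := by rw [hk1]; simpa using hx0pos k1
      _ ≤ ∑ j, C m0 j * x0 j := Finset.single_le_sum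
          (fun j _ => mul_nonneg (hCnn C hC m0 j) (hx0pos j).le) (Finset.mem_univ k1)
  set g0 : ℝ := C.mulVec x0 m0 / phat m0 with hg0def
  have hg0 : 0 < g0 := div_pos hCx0 (hphat m0)
  set x : Fin K → ℝ := g0⁻¹ • x0 with hxdef
  have hxpos : ∀ k, 0 < x k := fun k => mul_pos (inv_pos.2 hg0) (hx0pos k)
  have hxeig : (Bmat V z γ C phat m0).mulVec x = R • x := by
    rw [hxdef, Matrix.mulVec_smul, hx0eig, ← hRdef, smul_comm]
  have hCxlin : ∀ n, C.mulVec x n = g0⁻¹ * C.mulVec x0 n := by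
    intro n
    rw [mulVec_eq, mulVec_eq, Finset.mul_sum]
    refine Finset.sum_congr rfl fun j _ => ?_
    simp only [hxdef, Pi.smul_apply, smul_eq_mul]
    ring
  have hCx : C.mulVec x m0 = phat m0 := by
    rw [hCxlin m0, hg0def]
    field_simp
  have hbalx : ∀ k, γ k * (V.mulVec x k + z k) = R * x k := by
    intro k
    have h1 := congrFun hxeig k
    rw [Bmat_mulVec, hCx] at h1
    rw [inv_mul_cancel₀ (hphat m0).ne', one_mul] at h1
    simpa [Pi.smul_apply, smul_eq_mul] using h1
  have hxne : x ≠ 0 := fun h => (hxpos ⟨0, by omega⟩).ne' (by simpa using congrFun h ⟨0, by omega⟩)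
  have hxfeas : ∀ m, C.mulVec x m ≤ phat m := by
    intro m
    by_contra hcon
    push_neg at hcon
    have hstrict : ∀ k, R * x k < (Bmat V z γ C phat m).mulVec x k := by
      intro k
      rw [Bmat_mulVec, ← hbalx k]
      have h3 : 1 < (phat m)⁻¹ * C.mulVec x m := by
        rw [mul_comm, ← div_eq_mul_inv]
        exact (one_lt_div (hphat m)).2 hcon
      have h5 : z k * 1 < z k * ((phat m)⁻¹ * (C *ᵥ x) m) :=
        mul_lt_mul_of_pos_left h3 (hz k)
      apply mul_lt_mul_of_pos_left _ (hγ k)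
      nlinarith [h5]
    exact absurd (hRub m) (not_le.2 (cw_gt_of_lt hK (hBnn m) (hBirr m)
      (fun k => (hxpos k).le) hxne (fun k => (hstrict k).le) ⟨k1, hstrict k1⟩))
  have hxPset : x ∈ Pset C phat := ⟨fun k => (hxpos k).le, hxfeas⟩
  have hSIRx : ∀ k, SIR V z x k / γ k = R⁻¹ := by
    intro k
    have hdx := hd x (fun k => (hxpos k).le) k
    have hγk := hγ k
    have hxk := hxpos k
    unfold SIR
    rw [div_div, inv_eq_one_div, div_eq_div_iff (by positivity) (by positivity)]
    linear_combination (-1 : ℝ) * hbalx k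
  have hconst : (⨅ k, SIR V z x k / γ k) = R⁻¹ := by
    have h1 : (fun k => SIR V z x k / γ k) = fun _ => R⁻¹ := funext hSIRx
    rw [h1, ciInf_const]
  have hlow : R⁻¹ ≤ t := by
    have h2 := hbal.2 x hxPset
    rwa [hconst] at h2
  have ht0 : 0 < t := lt_of_lt_of_le (inv_pos.2 hR0) hlow
  have hSIRp : ∀ k, R⁻¹ ≤ SIR V z pbar k / γ k := fun k => le_trans hlow (iInf_le' _ k)
  have hppos : ∀ k, 0 < pbar k := by
    intro k
    have h1 := hSIRp k
    have hγk := hγ k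
    have hdk := hd pbar hpnn k
    have h2 : 0 < SIR V z pbar k := by
      have h5 := mul_le_mul_of_nonneg_right h1 hγk.le
      rw [div_mul_cancel₀ _ hγk.ne'] at h5
      calc (0:ℝ) < R⁻¹ * γ k := by positivity
        _ ≤ SIR V z pbar k := h5
    unfold SIR at h2
    rcases div_pos_iff.1 h2 with ⟨h3, -⟩ | ⟨-, h4⟩
    · exact h3
    · linarith
  have hpne : pbar ≠ 0 := fun h => (hppos ⟨0, by omega⟩).ne' (by simpa using congrFun h ⟨0, by omega⟩)
  have hKI : ∀ k, γ k * (V.mulVec pbar k + z k) ≤ R * pbar k := by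
    intro k
    have h1 := hSIRp k
    have hdk := hd pbar hpnn k
    have hγk := hγ k
    unfold SIR at h1
    rw [div_div, le_div_iff₀ (by positivity)] at h1
    calc γ k * (V.mulVec pbar k + z k) = R * (R⁻¹ * ((V.mulVec pbar k + z k) * γ k)) := by
          rw [← mul_assoc, mul_inv_cancel₀ hR0.ne', one_mul]
          ring
      _ ≤ R * pbar k := mul_le_mul_of_nonneg_left h1 hR0.le
  have hub : t ≤ R⁻¹ := by
    have hkey : ∀ k, (Bmat V z γ C phat m0).mulVec pbar k ≤ t⁻¹ * pbar k := by
      intro k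
      rw [Bmat_mulVec]
      have hdk := hd pbar hpnn k
      have hγk := hγ k
      have h3 : (phat m0)⁻¹ * C.mulVec pbar m0 ≤ 1 := by
        rw [mul_comm, ← div_eq_mul_inv]
        exact (div_le_one (hphat m0)).2 (hpC m0)
      have h4 : γ k * (V.mulVec pbar k + (phat m0)⁻¹ * C.mulVec pbar m0 * z k)
          ≤ γ k * (V.mulVec pbar k + z k) := by
        have h5 : (phat m0)⁻¹ * C.mulVec pbar m0 * z k ≤ z k := by
          calc (phat m0)⁻¹ * C.mulVec pbar m0 * z k ≤ 1 * z k :=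
                mul_le_mul_of_nonneg_right h3 (hz k).le
            _ = z k := one_mul _
        apply mul_le_mul_of_nonneg_left _ (hγ k).le
        linarith
      have h5 : γ k * (V.mulVec pbar k + z k) ≤ t⁻¹ * pbar k := by
        have h6 : t ≤ SIR V z pbar k / γ k := iInf_le' _ k
        unfold SIR at h6
        rw [div_div, le_div_iff₀ (by positivity)] at h6
        calc γ k * (V.mulVec pbar k + z k)
            = t⁻¹ * (t * ((V.mulVec pbar k + z k) * γ k)) := by
              rw [← mul_assoc, inv_mul_cancel₀ ht0.ne', one_mul]
              ring
          _ ≤ t⁻¹ * pbar k := mul_le_mul_of_nonneg_left h6 (inv_pos.2 ht0).le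
      linarith
    have h7 : R ≤ t⁻¹ := cw_le hK (hBnn m0) (hBirr m0) hpnn hpne hkey
    calc t = (t⁻¹)⁻¹ := (inv_inv t).symm
      _ ≤ R⁻¹ := by
          apply inv_anti₀ hR0 h7
  have htR : t = R⁻¹ := le_antisymm hub hlow
  -- balance
  set q : Fin K → ℝ := fun k => R * pbar k - γ k * (V.mulVec pbar k + z k) with hqdef
  have hqnn : ∀ k, 0 ≤ q k := fun k => by
    simp only [hqdef]
    linarith [hKI k]
  have hq0 : ∀ k, q k = 0 := by
    by_contra hcon
    push_neg at hcon
    obtain ⟨k2, hk2⟩ := hcon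
    have hqne : q ≠ 0 := fun h => hk2 (congrFun h k2)
    set M : Matrix (Fin K) (Fin K) ℝ := Matrix.of (fun i j => R⁻¹ * (γ i * V i j)) with hMdef
    have hMapp : ∀ i j, M i j = R⁻¹ * (γ i * V i j) := fun i j => rfl
    have hMnn : ∀ i j, 0 ≤ M i j := by
      intro i j
      rw [hMapp]
      have := hV i j
      have := hγ i
      positivity
    have hMirr : MatIrred M := by
      intro S h1 h2
      rcases hirr S h1 h2 with ⟨i, hi, j, hj, hij⟩
      refine ⟨i, hi, j, hj, ?_⟩
      rw [hMapp]
      have := hγ i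
      positivity
    set T : (Fin K → ℝ) → (Fin K → ℝ) :=
      fun p k => R⁻¹ * (γ k * (V.mulVec p k + z k)) with hTdef
    set q' : Fin K → ℝ := fun k => R⁻¹ * q k with hq'def
    have hq'nn : ∀ k, 0 ≤ q' k := fun k => mul_nonneg (inv_pos.2 hR0).le (hqnn k)
    have hq'ne : q' ≠ 0 := by
      intro h
      apply hk2
      have h1 := congrFun h k2
      simp only [hq'def, Pi.zero_apply] at h1
      rcases mul_eq_zero.1 h1 with h2 | h2
      · exact absurd h2 (inv_pos.2 hR0).ne'
      · exact h2
    have hTdiff : ∀ p p' : Fin K → ℝ,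
        (fun k => T p k - T p' k) = M.mulVec (fun j => p j - p' j) := by
      intro p p'
      funext k
      calc T p k - T p' k = R⁻¹ * (γ k * (V.mulVec p k - V.mulVec p' k)) := by
            simp only [hTdef]
            ring
        _ = R⁻¹ * (γ k * ∑ j, V k j * (p j - p' j)) := by
            rw [mulVec_eq, mulVec_eq, ← Finset.sum_sub_distrib]
            congr 2
            exact Finset.sum_congr rfl fun j _ => (mul_sub _ _ _).symm
        _ = ∑ j, M k j * (p j - p' j) := by
            rw [Finset.mul_sum, Finset.mul_sum]
            exact Finset.sum_congr rfl fun j _ => by rw [hMapp]; ring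
        _ = M.mulVec (fun j => p j - p' j) k := (mulVec_eq _ _ _).symm
    set yseq : ℕ → (Fin K → ℝ) := fun m => T^[m] pbar with hyseq
    have hy0 : yseq 0 = pbar := rfl
    have hysucc : ∀ m, yseq (m+1) = T (yseq m) := fun m => Function.iterate_succ_apply' T m pbar
    have hstep : ∀ m, (fun k => yseq m k - yseq (m+1) k) = iter M q' m := by
      intro m
      induction m with
      | zero =>
        funext k
        show pbar k - T pbar k = q' k
        simp only [hTdef, hq'def, hqdef]
        linear_combination (-(pbar k)) * inv_mul_cancel₀ hR0.ne'
      | succ m ih =>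
        have h1 : (fun k => yseq (m+1) k - yseq (m+2) k)
            = M.mulVec (fun j => yseq m j - yseq (m+1) j) := by
          rw [hysucc (m+1), hysucc m]
          exact hTdiff (yseq m) (T (yseq m))
        show _ = M.mulVec (iter M q' m)
        rw [h1, ← ih]
    have hiternn : ∀ m k, 0 ≤ iter M q' m k := iter_nonneg hMnn hq'nn
    have hdec : ∀ m k, yseq (m+1) k ≤ yseq m k := by
      intro m k
      have h1 := congrFun (hstep m) k
      have h2 := hiternn m k
      linarith [h1 ▸ h2]
    have hypos : ∀ m k, 0 < yseq m k := by
      intro m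
      induction m with
      | zero => exact hppos
      | succ m ih =>
        intro k
        rw [hysucc m]
        show 0 < R⁻¹ * (γ k * (V.mulVec (yseq m) k + z k))
        have h1 := hd (yseq m) (fun j => (ih j).le) k
        have := hγ k
        positivity
    have htel : ∀ k, pbar k - yseq K k = ∑ m ∈ Finset.range K, iter M q' m k := by
      intro k
      have h : ∀ mm, pbar k - yseq mm k = ∑ m ∈ Finset.range mm, iter M q' m k := by
        intro mm
        induction mm with
        | zero => simp [hy0]
        | succ mm ih =>
          rw [Finset.sum_range_succ, ← ih, ← congrFun (hstep mm) k]
          ring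
      exact h K
    have hlt : ∀ k, yseq K k < pbar k := by
      intro k
      have h1 := sum_iter_pos hMnn hMirr hq'nn hq'ne k
      have h2 := htel k
      linarith
    obtain ⟨k3, -, hk3min⟩ := Finset.exists_min_image Finset.univ
      (fun k => pbar k / yseq K k) Finset.univ_nonempty
    set c := pbar k3 / yseq K k3 with hcdef
    have hc1 : 1 < c := (one_lt_div (hypos K k3)).2 (hlt k3)
    set w : Fin K → ℝ := fun k => c * yseq K k with hwdef
    have hwpos : ∀ k, 0 < w k := fun k => mul_pos (lt_trans one_pos hc1) (hypos K k)
    have hwle : ∀ k, w k ≤ pbar k := by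
      intro k
      have h1 := hk3min k (Finset.mem_univ k)
      exact (le_div_iff₀ (hypos K k)).1 h1
    have hwfeas : w ∈ Pset C phat := by
      refine ⟨fun k => (hwpos k).le, fun n => ?_⟩
      calc C.mulVec w n ≤ C.mulVec pbar n := by
            rw [mulVec_eq, mulVec_eq]
            exact Finset.sum_le_sum fun j _ =>
              mul_le_mul_of_nonneg_left (hwle j) (hCnn C hC n j)
        _ ≤ phat n := hpC n
    have hTle : ∀ k, γ k * (V.mulVec (yseq K) k + z k) ≤ R * yseq K k := by
      intro k
      have h1 := hdec K k
      rw [hysucc K] at h1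
      have h2 : R⁻¹ * (γ k * (V.mulVec (yseq K) k + z k)) ≤ yseq K k := h1
      calc γ k * (V.mulVec (yseq K) k + z k)
          = R * (R⁻¹ * (γ k * (V.mulVec (yseq K) k + z k))) := by
            rw [← mul_assoc, mul_inv_cancel₀ hR0.ne', one_mul]
        _ ≤ R * yseq K k := mul_le_mul_of_nonneg_left h2 hR0.le
    have hVw : ∀ k, V.mulVec w k = c * V.mulVec (yseq K) k := by
      intro k
      rw [mulVec_eq, mulVec_eq, Finset.mul_sum]
      refine Finset.sum_congr rfl fun j _ => ?_
      simp only [hwdef]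
      ring
    have hSIRw : ∀ k, R⁻¹ < SIR V z w k / γ k := by
      intro k
      have hdw := hd w (fun j => (hwpos j).le) k
      have hγk := hγ k
      have hclaim : γ k * (V.mulVec w k + z k) < R * w k := by
        rw [hVw k]
        simp only [hwdef]
        have h1 := hTle k
        have hz3 := hz k
        have hc0 : (0:ℝ) ≤ c := le_of_lt (lt_trans one_pos hc1)
        have h2 : c * (γ k * (V.mulVec (yseq K) k + z k)) ≤ c * (R * yseq K k) :=
          mul_le_mul_of_nonneg_left h1 hc0
        have h3 : 0 < (c - 1) * (γ k * z k) :=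
          mul_pos (by linarith) (mul_pos hγk hz3)
        nlinarith [h2, h3]
      unfold SIR
      rw [div_div, lt_div_iff₀ (by positivity)]
      calc R⁻¹ * ((V.mulVec w k + z k) * γ k) < R⁻¹ * (R * w k) := by
            apply mul_lt_mul_of_pos_left _ (inv_pos.2 hR0)
            linarith [hclaim]
        _ = w k := by
            rw [← mul_assoc, inv_mul_cancel₀ hR0.ne', one_mul]
    have hcontr := hbal.2 w hwfeas
    obtain ⟨k4, hk4⟩ := exists_iInf_eq (fun k => SIR V z w k / γ k)
    rw [hk4, ← htdef, htR] at hcontr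
    linarith [hSIRw k4]
  refine ⟨R, hR0, hRub, ⟨m0, rfl⟩, hppos, fun k => ?_⟩
  have h1 := hq0 k
  simp only [hqdef] at h1
  linarith

end App


end Stmt11Aux

open Stmt11Aux

theorem stmt11    {K N : ℕ} (hK : 2 ≤ K) (hN : 1 ≤ N)
    (V : Matrix (Fin K) (Fin K) ℝ) (z γ : Fin K → ℝ)
    (C : Matrix (Fin N) (Fin K) ℝ) (phat : Fin N → ℝ)
    (hV : ∀ i j, 0 ≤ V i j) (hVdiag : ∀ i, V i i = 0)
    (hz : ∀ k, 0 < z k) (hγ : ∀ k, 0 < γ k)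
    (hC : ∀ n k, C n k = 0 ∨ C n k = 1) (hCcol : ∀ k, ∃ n, C n k = 1)
    (hphat : ∀ n, 0 < phat n)
    (hirr : MatIrred V)
    (pbar : Fin K → ℝ) (hbal : MaxMinBalanced V z γ C phat pbar) :
    activeSet C phat pbar =
      {n : Fin N | ∀ m, specRad (Bmat V z γ C phat m) ≤ specRad (Bmat V z γ C phat n)} := by
  haveI : Nonempty (Fin K) := ⟨⟨0, by omega⟩⟩
  obtain ⟨R, hR0, hRub, ⟨m0, hm0⟩, hppos, hbalance⟩ :=
    main_facts hK V z γ C phat hV hz hγ hC hphat hirr hCcol pbar hbal (by omega)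
  have hBnn := Bmat_nonneg V z γ C phat hV hz hγ hC hphat
  have hBirr := Bmat_irred V z γ C phat hV hz hγ hC hphat hirr
  have hpnn : ∀ k, 0 ≤ pbar k := fun k => (hppos k).le
  have hpC : ∀ n, C.mulVec pbar n ≤ phat n := hbal.1.2
  have hpne : pbar ≠ 0 :=
    fun h => (hppos ⟨0, by omega⟩).ne' (by simpa using congrFun h ⟨0, by omega⟩)
  have hgle : ∀ n, gcon C phat n pbar ≤ 1 := fun n =>
    (div_le_one (hphat n)).2 (hpC n)
  have hBp : ∀ (n : Fin N) (k : Fin K), (Bmat V z γ C phat n).mulVec pbar k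
      = R * pbar k - γ k * z k * (1 - gcon C phat n pbar) := by
    intro n k
    rw [Bmat_mulVec]
    unfold gcon
    rw [div_eq_mul_inv]
    linear_combination hbalance k
  ext n
  simp only [activeSet, Set.mem_setOf_eq]
  constructor
  · rintro ⟨hg1, -⟩
    intro m
    have heq : ∀ k, (Bmat V z γ C phat n).mulVec pbar k = R * pbar k := by
      intro k
      rw [hBp n k, hg1]
      ring
    have h2 : R ≤ specRad (Bmat V z γ C phat n) :=
      cw_ge hK (hBnn n) (hBirr n) hpnn hpne (fun k => (heq k).ge)
    calc specRad (Bmat V z γ C phat m) ≤ R := hRub m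
      _ ≤ specRad (Bmat V z γ C phat n) := h2
  · intro hmax
    have hRn : specRad (Bmat V z γ C phat n) = R :=
      le_antisymm (hRub n) (hm0 ▸ hmax m0)
    have hg1 : gcon C phat n pbar = 1 := by
      by_contra hne
      have hglt : gcon C phat n pbar < 1 := lt_of_le_of_ne (hgle n) hne
      have hlt : ∀ k, (Bmat V z γ C phat n).mulVec pbar k < R * pbar k := by
        intro k
        rw [hBp n k]
        have h1 : 0 < γ k * z k * (1 - gcon C phat n pbar) :=
          mul_pos (mul_pos (hγ k) (hz k)) (by linarith)
        linarith
      have h3 := cw_lt_of_lt hK (hBnn n) (hBirr n) hpnn hpne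
        (fun k => (hlt k).le) ⟨⟨0, by omega⟩, hlt _⟩
      rw [hRn] at h3
      exact lt_irrefl R h3
    exact ⟨hg1, fun m => by rw [hg1]; exact hgle m⟩
end

section
/- If the gain matrix V is irreducible, then the optimal value of the max-min SIR-balancing problem equals the reciprocal of the largest spectral radius: max_{p ∈ P} min_{1≤k≤K} SIR_k(p)/γ_k = 1 / max_{1≤n≤N} ρ(B^(n)). -/
open Matrix

section spec
variable {K : ℕ} (M : Matrix (Fin K) (Fin K) ℝ)

lemma spec_nonempty (hK : 1 ≤ K) : (spectrum ℂ (M.map fun x => (x:ℂ))).Nonempty := by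
  have : Nonempty (Fin K) := ⟨⟨0, hK⟩⟩
  set Mc := M.map fun x => (x:ℂ)
  have h := AlgEquiv.spectrum_eq (Matrix.toLinAlgEquiv' (R := ℂ) (n := Fin K)) Mc
  rw [← h]
  obtain ⟨μ, hμ⟩ := Module.End.exists_eigenvalue (Matrix.toLinAlgEquiv' Mc)
  exact ⟨μ, (Module.End.hasEigenvalue_iff_mem_spectrum).mp hμ⟩

lemma spec_finite : (spectrum ℂ (M.map fun x => (x:ℂ))).Finite :=
  Matrix.finite_spectrum _

lemma exists_max_abs_eig (hK : 1 ≤ K) :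
    ∃ μ ∈ spectrum ℂ (M.map fun x => (x:ℂ)), ‖μ‖ = specRad M := by
  have hne := spec_nonempty M hK
  have hfin := spec_finite M
  have h1 : ((fun w : ℂ => ‖w‖) '' spectrum ℂ (M.map fun x => (x:ℂ))).Nonempty := hne.image _
  have h2 : ((fun w : ℂ => ‖w‖) '' spectrum ℂ (M.map fun x => (x:ℂ))).Finite := hfin.image _
  have := h1.csSup_mem h2
  obtain ⟨μ, hμ, hμ2⟩ := this
  exact ⟨μ, hμ, hμ2⟩

lemma eig_exists_vec {μ : ℂ} (hμ : μ ∈ spectrum ℂ (M.map fun x => (x:ℂ))) :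
    ∃ x : Fin K → ℂ, x ≠ 0 ∧ (M.map fun x => (x:ℂ)).mulVec x = μ • x := by
  set Mc := M.map fun x => (x:ℂ)
  have h := AlgEquiv.spectrum_eq (Matrix.toLinAlgEquiv' (R := ℂ) (n := Fin K)) Mc
  rw [← h] at hμ
  have hev : Module.End.HasEigenvalue (Matrix.toLinAlgEquiv' Mc) μ :=
    Module.End.hasEigenvalue_iff_mem_spectrum.mpr hμ
  obtain ⟨x, hx1, hx2⟩ := hev.exists_hasEigenvector
  rw [Module.End.mem_eigenspace_iff] at hx1
  refine ⟨x, hx2, ?_⟩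
  have : Matrix.toLinAlgEquiv' Mc x = Mc.mulVec x := rfl
  rw [← this]
  exact hx1

lemma real_eig_mem {r : ℝ} {v : Fin K → ℝ} (hv : v ≠ 0) (h : M.mulVec v = r • v) :
    (r : ℂ) ∈ spectrum ℂ (M.map fun x => (x:ℂ)) := by
  set Mc := M.map fun x => (x:ℂ)
  have heq := AlgEquiv.spectrum_eq (Matrix.toLinAlgEquiv' (R := ℂ) (n := Fin K)) Mc
  rw [← heq]
  rw [← Module.End.hasEigenvalue_iff_mem_spectrum]
  apply Module.End.hasEigenvalue_of_hasEigenvector (x := fun k => (v k : ℂ))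
  constructor
  · rw [Module.End.mem_eigenspace_iff]
    have : Matrix.toLinAlgEquiv' Mc (fun k => (v k : ℂ)) = Mc.mulVec (fun k => (v k : ℂ)) := rfl
    rw [this]
    funext k
    have hmap := RingHom.map_mulVec Complex.ofRealHom M v k
    have hcast : (Mc *ᵥ fun k => (v k : ℂ)) k = ((M *ᵥ v) k : ℂ) := hmap.symm
    rw [hcast, h]
    simp [Pi.smul_apply, smul_eq_mul]
  · intro hx
    apply hv
    funext k
    have := congrFun hx k
    simp only [Pi.zero_apply, Complex.ofReal_eq_zero] at this
    exact this

end spec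

section cw
variable {K : ℕ}

lemma triangle_ineq (M : Matrix (Fin K) (Fin K) ℝ) (hM : ∀ i j, 0 ≤ M i j)
    {μ : ℂ} {x : Fin K → ℂ} (hx : (M.map fun t => (t:ℂ)).mulVec x = μ • x) (k : Fin K) :
    ‖μ‖ * ‖x k‖ ≤ M.mulVec (fun j => ‖x j‖) k := by
  have h1 : ‖μ * x k‖ = ‖(M.map fun t => (t:ℂ)).mulVec x k‖ := by
    rw [hx]; rfl
  calc ‖μ‖ * ‖x k‖ = ‖μ * x k‖ := (norm_mul _ _).symm
    _ = ‖∑ j, (M k j : ℂ) * x j‖ := by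
        rw [h1]; rfl
    _ ≤ ∑ j, ‖(M k j : ℂ) * x j‖ := norm_sum_le _ _
    _ = ∑ j, M k j * ‖x j‖ := by
        refine Finset.sum_congr rfl fun j _ => ?_
        rw [norm_mul, Complex.norm_real, Real.norm_of_nonneg (hM k j)]
    _ = M.mulVec (fun j => ‖x j‖) k := rfl

/-- Collatz–Wielandt upper bound. -/
lemma specRad_le_of_subinv (hK : 1 ≤ K) (M : Matrix (Fin K) (Fin K) ℝ)
    (hM : ∀ i j, 0 ≤ M i j) {q : Fin K → ℝ} (hq : ∀ k, 0 < q k) {c : ℝ}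
    (h : ∀ k, M.mulVec q k ≤ c * q k) : specRad M ≤ c := by
  have : Nonempty (Fin K) := ⟨⟨0, hK⟩⟩
  obtain ⟨μ, hμmem, hμ⟩ := exists_max_abs_eig M hK
  obtain ⟨x, hx0, hx⟩ := eig_exists_vec M hμmem
  set y : Fin K → ℝ := fun j => ‖x j‖ with hy
  have hyn : ∀ j, 0 ≤ y j := fun j => (norm_nonneg _)
  obtain ⟨k0, _, hk0⟩ := Finset.exists_max_image Finset.univ (fun k => y k / q k) ⟨⟨0,hK⟩, Finset.mem_univ _⟩
  set c' := y k0 / q k0 with hc'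
  have hyq : ∀ k, y k ≤ c' * q k := by
    intro k
    have := hk0 k (Finset.mem_univ k)
    rw [div_le_div_iff₀ (hq k) (hq k0)] at this
    rw [hc', div_mul_eq_mul_div, le_div_iff₀ (hq k0)]
    linarith
  have hc'pos : 0 < c' := by
    obtain ⟨k', hk'⟩ : ∃ k', x k' ≠ 0 := by
      by_contra hall
      push_neg at hall
      exact hx0 (funext fun k => hall k)
    have : 0 < y k' := by
      simpa [hy] using (norm_pos_iff.mpr hk')
    have h2 := hk0 k' (Finset.mem_univ k')
    have : 0 < y k' / q k' := div_pos this (hq k')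
    linarith
  have key : ‖μ‖ * (c' * q k0) ≤ c * (c' * q k0) := by
    have h1 : ‖μ‖ * y k0 ≤ M.mulVec y k0 := triangle_ineq M hM hx k0
    have h2 : M.mulVec y k0 ≤ c' * M.mulVec q k0 := by
      simp only [Matrix.mulVec, dotProduct, Finset.mul_sum]
      refine Finset.sum_le_sum fun j _ => ?_
      calc M k0 j * y j ≤ M k0 j * (c' * q j) :=
            mul_le_mul_of_nonneg_left (hyq j) (hM k0 j)
        _ = c' * (M k0 j * q j) := by ring
    have h3 : c' * M.mulVec q k0 ≤ c' * (c * q k0) :=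
      mul_le_mul_of_nonneg_left (h k0) (le_of_lt hc'pos)
    have hyk0 : y k0 = c' * q k0 := by
      rw [hc']; field_simp [(hq k0).ne']
    calc ‖μ‖ * (c' * q k0) = ‖μ‖ * y k0 := by rw [hyk0]
      _ ≤ M.mulVec y k0 := h1
      _ ≤ c' * M.mulVec q k0 := h2
      _ ≤ c' * (c * q k0) := h3
      _ = c * (c' * q k0) := by ring
  have hpos : 0 < c' * q k0 := mul_pos hc'pos (hq k0)
  have := le_of_mul_le_mul_right key hpos
  rw [← hμ]; exact this

/-- Eigenvalue lower bound for the spectral radius. -/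
lemma abs_le_specRad (M : Matrix (Fin K) (Fin K) ℝ) {r : ℝ} {v : Fin K → ℝ}
    (hv : v ≠ 0) (h : M.mulVec v = r • v) : |r| ≤ specRad M := by
  have hmem := real_eig_mem M hv h
  have : ‖(r : ℂ)‖ ∈ (fun w : ℂ => ‖w‖) '' spectrum ℂ (M.map fun x => (x:ℂ)) :=
    ⟨_, hmem, rfl⟩
  have hbdd : BddAbove ((fun w : ℂ => ‖w‖) '' spectrum ℂ (M.map fun x => (x:ℂ))) :=
    ((spec_finite M).image _).bddAbove
  have := le_csSup hbdd this
  simpa [specRad, Complex.norm_real, Real.norm_eq_abs] using this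

end cw

section pf
variable {K : ℕ}

lemma pow_nonneg_entries (Q : Matrix (Fin K) (Fin K) ℝ) (hQ : ∀ i j, 0 ≤ Q i j) :
    ∀ m i j, 0 ≤ (Q^m) i j := by
  intro m
  induction m with
  | zero => intro i j; by_cases h : i = j <;> simp [h, Matrix.one_apply]
  | succ m ih =>
    intro i j
    rw [pow_succ, Matrix.mul_apply]
    exact Finset.sum_nonneg fun l _ => mul_nonneg (ih i l) (hQ l j)

lemma one_add_pow_pos (hK : 1 ≤ K) (A : Matrix (Fin K) (Fin K) ℝ)
    (hA : ∀ i j, 0 ≤ A i j) (hirr : MatIrred A) :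
    ∀ i j, 0 < ((1 + A)^(K-1)) i j := by
  set Q : Matrix (Fin K) (Fin K) ℝ := 1 + A with hQdef
  have hQ : ∀ i j, 0 ≤ Q i j := by
    intro i j
    simp only [hQdef, Matrix.add_apply, Matrix.one_apply]
    by_cases h : i = j
    · simp only [h, if_true]
      have := hA j j; linarith
    · simp [h, hA i j]
  have hQdiag : ∀ i, 1 ≤ Q i i := by
    intro i; simp [hQdef, Matrix.add_apply, Matrix.one_apply_eq, hA i i]
  have hQA : ∀ i j, A i j ≤ Q i j := by
    intro i j
    simp only [hQdef, Matrix.add_apply, Matrix.one_apply]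
    by_cases h : i = j <;> simp [h]
  have hpow := pow_nonneg_entries Q hQ
  have hstep : ∀ m i j, (Q^m) i j ≤ (Q^(m+1)) i j := by
    intro m i j
    rw [pow_succ, Matrix.mul_apply]
    calc (Q^m) i j = (Q^m) i j * 1 := (mul_one _).symm
      _ ≤ (Q^m) i j * Q j j := mul_le_mul_of_nonneg_left (hQdiag j) (hpow m i j)
      _ ≤ ∑ l, (Q^m) i l * Q l j :=
          Finset.single_le_sum (fun l _ => mul_nonneg (hpow m i l) (hQ l j))
            (Finset.mem_univ j)
  have hedge : ∀ m i l j, 0 < (Q^m) i l → 0 < A l j → 0 < (Q^(m+1)) i j := by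
    intro m i l j h1 h2
    rw [pow_succ, Matrix.mul_apply]
    have : 0 < (Q^m) i l * Q l j := mul_pos h1 (lt_of_lt_of_le h2 (hQA l j))
    calc (0:ℝ) < (Q^m) i l * Q l j := this
      _ ≤ ∑ l', (Q^m) i l' * Q l' j :=
          Finset.single_le_sum (fun l' _ => mul_nonneg (hpow m i l') (hQ l' j))
            (Finset.mem_univ l)
  intro i j
  classical
  set T : ℕ → Finset (Fin K) := fun m => Finset.univ.filter (fun j' => 0 < (Q^m) i j') with hT
  have hmemi : ∀ m, i ∈ T m := by
    intro m
    induction m with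
    | zero =>
      simp only [hT, Finset.mem_filter, Finset.mem_univ, true_and]
      simp [Matrix.one_apply_eq]
    | succ m ih =>
      simp only [hT, Finset.mem_filter, Finset.mem_univ, true_and] at ih ⊢
      exact lt_of_lt_of_le ih (hstep m i i)
  have hsub : ∀ m, T m ⊆ T (m+1) := by
    intro m j' hj'
    simp only [hT, Finset.mem_filter, Finset.mem_univ, true_and] at hj' ⊢
    exact lt_of_lt_of_le hj' (hstep m i j')
  have hcard : ∀ m, T m = Finset.univ ∨ m + 1 ≤ (T m).card := by
    intro m
    induction m with
    | zero =>
      by_cases h : T 0 = Finset.univ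
      · exact Or.inl h
      · right
        exact Finset.card_pos.mpr ⟨i, hmemi 0⟩
    | succ m ih =>
      by_cases h : T m = Finset.univ
      · left
        apply Finset.eq_univ_of_forall
        intro j'
        exact hsub m (h ▸ Finset.mem_univ j')
      · rcases ih with ih | ih
        · exact absurd ih h
        · right
          -- growth via irreducibility
          have hSne : (↑(T m) : Set (Fin K)).Nonempty := ⟨i, hmemi m⟩
          have hSneuniv : (↑(T m) : Set (Fin K)) ≠ Set.univ := by
            intro hcontra
            apply h
            apply Finset.eq_univ_of_forall
            intro j'
            have : j' ∈ (↑(T m) : Set (Fin K)) := hcontra ▸ Set.mem_univ j'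
            exact this
          obtain ⟨l, hl, j', hj', hAlj⟩ := hirr _ hSne hSneuniv
          have hl' : 0 < (Q^m) i l := by
            have : l ∈ T m := hl
            simpa [hT, Finset.mem_filter] using this
          have hj'new : j' ∈ T (m+1) := by
            simp only [hT, Finset.mem_filter, Finset.mem_univ, true_and]
            exact hedge m i l j' hl' hAlj
          have hj'old : j' ∉ T m := hj'
          have hss : T m ⊂ T (m+1) := ⟨hsub m, fun hrev => hj'old (hrev hj'new)⟩
          have := Finset.card_lt_card hss
          omega
  rcases hcard (K-1) with h | h
  · have : j ∈ T (K-1) := h ▸ Finset.mem_univ j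
    simpa [hT, Finset.mem_filter] using this
  · have hKcard : (T (K-1)).card = K := by
      have h1 : (T (K-1)).card ≤ K := by
        simpa using Finset.card_le_univ (T (K-1))
      omega
    have : T (K-1) = Finset.univ := by
      apply Finset.eq_univ_of_card
      simpa using hKcard
    have : j ∈ T (K-1) := this ▸ Finset.mem_univ j
    simpa [hT, Finset.mem_filter] using this

end pf

section pfmain
variable {K : ℕ}

lemma mulVec_nonneg (A : Matrix (Fin K) (Fin K) ℝ) (hA : ∀ i j, 0 ≤ A i j)
    {x : Fin K → ℝ} (hx : ∀ k, 0 ≤ x k) (k : Fin K) : 0 ≤ A.mulVec x k := by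
  have h : A.mulVec x k = ∑ l, A k l * x l := rfl
  rw [h]
  exact Finset.sum_nonneg fun j _ => mul_nonneg (hA k j) (hx j)

lemma mulVec_pos_entry (A : Matrix (Fin K) (Fin K) ℝ) (hA : ∀ i j, 0 ≤ A i j)
    {x : Fin K → ℝ} (hx : ∀ k, 0 ≤ x k) {k j : Fin K} (h1 : 0 < A k j) (h2 : 0 < x j) :
    0 < A.mulVec x k := by
  have h : A.mulVec x k = ∑ l, A k l * x l := rfl
  rw [h]
  exact lt_of_lt_of_le (mul_pos h1 h2)
    (Finset.single_le_sum (fun l _ => mul_nonneg (hA k l) (hx l)) (Finset.mem_univ j))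

lemma perron_frobenius (hK : 1 ≤ K) (A : Matrix (Fin K) (Fin K) ℝ)
    (hA : ∀ i j, 0 ≤ A i j) (hirr : MatIrred A) :
    ∃ r : ℝ, 0 ≤ r ∧ ∃ v : Fin K → ℝ, (∀ k, 0 < v k) ∧ A.mulVec v = r • v := by
  have hne : Nonempty (Fin K) := ⟨⟨0, hK⟩⟩
  classical
  set R : ℝ := ∑ k, ∑ j, A k j with hR
  set D : Set (ℝ × (Fin K → ℝ)) :=
    {p | 0 ≤ p.1 ∧ (∀ k, 0 ≤ p.2 k) ∧ (∑ k, p.2 k) = 1 ∧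
      ∀ k, p.1 * p.2 k ≤ A.mulVec p.2 k} with hD
  -- boundedness of the first coordinate
  have hbound : ∀ p ∈ D, p.1 ≤ R := by
    rintro ⟨t, x⟩ ⟨ht0, hx0, hxs, hineq⟩
    have hxle1 : ∀ j, x j ≤ 1 := by
      intro j
      calc x j ≤ ∑ k, x k := Finset.single_le_sum (fun l _ => hx0 l) (Finset.mem_univ j)
        _ = 1 := hxs
    calc t = t * ∑ k, x k := by rw [hxs, mul_one]
      _ = ∑ k, t * x k := Finset.mul_sum _ _ _
      _ ≤ ∑ k, A.mulVec x k := Finset.sum_le_sum fun k _ => hineq k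
      _ = ∑ k, ∑ j, A k j * x j := rfl
      _ ≤ ∑ k, ∑ j, A k j * 1 := by
          refine Finset.sum_le_sum fun k _ => Finset.sum_le_sum fun j _ => ?_
          exact mul_le_mul_of_nonneg_left (hxle1 j) (hA k j)
      _ = R := by simp [hR]
  -- D is compact
  have hDclosed : IsClosed D := by
    have h1 : IsClosed {p : ℝ × (Fin K → ℝ) | 0 ≤ p.1} :=
      isClosed_le continuous_const continuous_fst
    have h2 : IsClosed {p : ℝ × (Fin K → ℝ) | ∀ k, 0 ≤ p.2 k} := by
      rw [Set.setOf_forall]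
      exact isClosed_iInter fun k =>
        isClosed_le continuous_const ((continuous_apply k).comp continuous_snd)
    have h3 : IsClosed {p : ℝ × (Fin K → ℝ) | (∑ k, p.2 k) = 1} := by
      apply isClosed_eq _ continuous_const
      exact continuous_finset_sum Finset.univ fun k _ => (continuous_apply k).comp continuous_snd
    have h4 : IsClosed {p : ℝ × (Fin K → ℝ) | ∀ k, p.1 * p.2 k ≤ A.mulVec p.2 k} := by
      rw [Set.setOf_forall]
      refine isClosed_iInter fun k => isClosed_le ?_ ?_
      · exact continuous_fst.mul ((continuous_apply k).comp continuous_snd)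
      · have : (fun p : ℝ × (Fin K → ℝ) => A.mulVec p.2 k)
            = fun p : ℝ × (Fin K → ℝ) => ∑ j, A k j * p.2 j := rfl
        rw [this]
        exact continuous_finset_sum Finset.univ fun j _ =>
          (continuous_const.mul ((continuous_apply j).comp continuous_snd))
    have hDeq : D = {p : ℝ × (Fin K → ℝ) | 0 ≤ p.1} ∩ ({p | ∀ k, 0 ≤ p.2 k} ∩
        ({p | (∑ k, p.2 k) = 1} ∩ {p | ∀ k, p.1 * p.2 k ≤ A.mulVec p.2 k})) := by
      ext p
      simp only [hD, Set.mem_setOf_eq, Set.mem_inter_iff, and_assoc]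
    rw [hDeq]
    exact h1.inter (h2.inter (h3.inter h4))
  have hDcompact : IsCompact D := by
    apply IsCompact.of_isClosed_subset
      ((isCompact_Icc (a := (0:ℝ)) (b := R)).prod
        (isCompact_Icc (a := (0 : Fin K → ℝ)) (b := 1))) hDclosed
    rintro ⟨t, x⟩ hp
    obtain ⟨ht0, hx0, hxs, hineq⟩ := hp
    constructor
    · exact ⟨ht0, hbound _ ⟨ht0, hx0, hxs, hineq⟩⟩
    · constructor
      · intro k; exact hx0 k
      · intro k
        calc x k ≤ ∑ j, x j := Finset.single_le_sum (fun l _ => hx0 l) (Finset.mem_univ k)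
          _ = 1 := hxs
  -- D is nonempty
  have hDne : D.Nonempty := by
    refine ⟨(0, fun _ => (K:ℝ)⁻¹), ?_, ?_, ?_, ?_⟩
    · exact le_refl 0
    · intro k
      positivity
    · show (∑ _k : Fin K, (K:ℝ)⁻¹) = 1
      have hKne : (K:ℝ) ≠ 0 := Nat.cast_ne_zero.mpr (by omega)
      rw [Finset.sum_const, Finset.card_univ, Fintype.card_fin, nsmul_eq_mul]
      field_simp
    · intro k
      simp only [zero_mul]
      exact mulVec_nonneg A hA (fun _ => by positivity) k
  -- take the maximizer
  obtain ⟨⟨r, x⟩, hpD, hmax⟩ := hDcompact.exists_isMaxOn hDne continuous_fst.continuousOn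
  obtain ⟨hr0, hx0, hxs, hineq⟩ := hpD
  have hmax' : ∀ q ∈ D, q.1 ≤ r := fun q hq => hmax hq
  -- the eigen equation holds
  have heig : A.mulVec x = r • x := by
    by_contra hcontra
    set y : Fin K → ℝ := fun k => A.mulVec x k - r * x k with hy
    have hy0 : ∀ k, 0 ≤ y k := fun k => sub_nonneg.mpr (hineq k)
    have hyne : ∃ k, 0 < y k := by
      by_contra hall
      push_neg at hall
      apply hcontra
      funext k
      have h1 : y k = 0 := le_antisymm (hall k) (hy0 k)
      have : A.mulVec x k = r * x k := by
        have := h1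
        simp only [hy] at this
        linarith
      simpa [Pi.smul_apply, smul_eq_mul] using this
    obtain ⟨k1, hk1⟩ := hyne
    set P : Matrix (Fin K) (Fin K) ℝ := (1 + A)^(K-1) with hP
    have hPpos : ∀ i j, 0 < P i j := one_add_pow_pos hK A hA hirr
    have hPnn : ∀ i j, 0 ≤ P i j := fun i j => le_of_lt (hPpos i j)
    -- u = P x is positive
    obtain ⟨j0, hj0⟩ : ∃ j0, 0 < x j0 := by
      by_contra hall
      push_neg at hall
      have : ∀ k, x k = 0 := fun k => le_antisymm (hall k) (hx0 k)
      rw [show (∑ k, x k) = 0 from Finset.sum_eq_zero fun k _ => this k] at hxs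
      norm_num at hxs
    set u := P.mulVec x with hu
    have hupos : ∀ k, 0 < u k := fun k => mulVec_pos_entry P hPnn hx0 (hPpos k j0) hj0
    -- w = P y is positive
    set w := P.mulVec y with hw
    have hwpos : ∀ k, 0 < w k := fun k => mulVec_pos_entry P hPnn hy0 (hPpos k k1) hk1
    -- A u - r u = w entrywise
    have hcomm : A * P = P * A := by
      have : Commute A (1 + A) := (Commute.one_right A).add_right (Commute.refl A)
      exact (this.pow_right (K-1)).eq
    have hkey : ∀ k, A.mulVec u k = r * u k + w k := by
      intro k
      have h1 : A.mulVec u = P.mulVec (A.mulVec x) := by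
        rw [hu, Matrix.mulVec_mulVec, hcomm, ← Matrix.mulVec_mulVec]
      have h2 : y = A.mulVec x - r • x := by
        funext k'; simp [hy, Pi.sub_apply, Pi.smul_apply, smul_eq_mul]
      have h3 : P.mulVec y = P.mulVec (A.mulVec x) - r • P.mulVec x := by
        rw [h2, Matrix.mulVec_sub, Matrix.mulVec_smul]
      have := congrFun h3 k
      simp only [Pi.sub_apply, Pi.smul_apply, smul_eq_mul] at this
      rw [h1]
      have h4 : w k = P.mulVec y k := rfl
      rw [h4, this, ← hu]
      ring
    have hgt : ∀ k, r * u k < A.mulVec u k := by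
      intro k; rw [hkey k]; linarith [hwpos k]
    -- define t' as the min ratio
    obtain ⟨k2, _, hk2⟩ := Finset.exists_min_image Finset.univ
      (fun k => A.mulVec u k / u k) ⟨⟨0,hK⟩, Finset.mem_univ _⟩
    set t' := A.mulVec u k2 / u k2 with ht'
    have ht'r : r < t' := by
      rw [ht', lt_div_iff₀ (hupos k2)]
      linarith [hgt k2]
    have ht'le : ∀ k, t' * u k ≤ A.mulVec u k := by
      intro k
      have h := hk2 k (Finset.mem_univ k)
      rw [le_div_iff₀ (hupos k)] at h
      exact h
    -- normalize u
    set s := ∑ k, u k with hs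
    have hspos : 0 < s := Finset.sum_pos (fun k _ => hupos k) ⟨⟨0,hK⟩, Finset.mem_univ _⟩
    have hmem : (t', s⁻¹ • u) ∈ D := by
      refine ⟨le_trans hr0 (le_of_lt ht'r), ?_, ?_, ?_⟩
      · intro k
        exact mul_nonneg (inv_nonneg.mpr (le_of_lt hspos)) (le_of_lt (hupos k))
      · show (∑ k, (s⁻¹ • u) k) = 1
        simp only [Pi.smul_apply, smul_eq_mul]
        rw [← Finset.mul_sum, ← hs]
        field_simp
      · intro k
        show t' * (s⁻¹ • u) k ≤ (A.mulVec (s⁻¹ • u)) k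
        have h5 : A.mulVec (s⁻¹ • u) k = s⁻¹ * A.mulVec u k := by
          rw [Matrix.mulVec_smul]; rfl
        have h6 : (s⁻¹ • u) k = s⁻¹ * u k := rfl
        rw [h5, h6]
        have hsinv : 0 ≤ s⁻¹ := inv_nonneg.mpr (le_of_lt hspos)
        calc t' * (s⁻¹ * u k) = s⁻¹ * (t' * u k) := by ring
          _ ≤ s⁻¹ * A.mulVec u k := mul_le_mul_of_nonneg_left (ht'le k) hsinv
    have := hmax' _ hmem
    simp only at this
    linarith
  -- positivity of x
  have hxpos : ∀ k, 0 < x k := by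
    by_contra hall
    push_neg at hall
    obtain ⟨i0, hi0⟩ := hall
    have hxi0 : x i0 = 0 := le_antisymm hi0 (hx0 i0)
    set Z : Set (Fin K) := {k | x k = 0} with hZ
    have hZne : Z.Nonempty := ⟨i0, hxi0⟩
    have hZneuniv : Z ≠ Set.univ := by
      obtain ⟨j0, hj0⟩ : ∃ j0, 0 < x j0 := by
        by_contra hall'
        push_neg at hall'
        have : ∀ k, x k = 0 := fun k => le_antisymm (hall' k) (hx0 k)
        rw [show (∑ k, x k) = 0 from Finset.sum_eq_zero fun k _ => this k] at hxs
        norm_num at hxs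
      intro hcontra
      have : x j0 = 0 := by
        have : j0 ∈ Z := hcontra ▸ Set.mem_univ j0
        exact this
      linarith
    obtain ⟨i, hi, j, hj, hAij⟩ := hirr Z hZne hZneuniv
    have hxi : x i = 0 := hi
    have hxj : 0 < x j := by
      have : x j ≠ 0 := hj
      exact lt_of_le_of_ne (hx0 j) (Ne.symm this)
    have h1 : 0 < A.mulVec x i := mulVec_pos_entry A hA hx0 hAij hxj
    have h2 : A.mulVec x i = r * x i := by
      have := congrFun heig i
      simpa [Pi.smul_apply, smul_eq_mul] using this
    rw [h2, hxi, mul_zero] at h1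
    exact lt_irrefl 0 h1
  exact ⟨r, hr0, x, hxpos, heig⟩

end pfmain
section derived
variable {K : ℕ}

lemma perron_specRad (hK : 1 ≤ K) (A : Matrix (Fin K) (Fin K) ℝ)
    (hA : ∀ i j, 0 ≤ A i j) (hirr : MatIrred A) :
    ∃ v : Fin K → ℝ, (∀ k, 0 < v k) ∧ A.mulVec v = specRad A • v := by
  obtain ⟨r, hr0, v, hv, heig⟩ := perron_frobenius hK A hA hirr
  have hvne : v ≠ 0 := by
    intro h
    have := congrFun h ⟨0, hK⟩
    simp only [Pi.zero_apply] at this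
    exact absurd this (ne_of_gt (hv ⟨0, hK⟩))
  have hle : specRad A ≤ r := by
    apply specRad_le_of_subinv hK A hA hv
    intro k
    have := congrFun heig k
    simp only [Pi.smul_apply, smul_eq_mul] at this
    exact le_of_eq this
  have hge : r ≤ specRad A := by
    have := abs_le_specRad A hvne heig
    rwa [abs_of_nonneg hr0] at this
  have : specRad A = r := le_antisymm hle hge
  rw [this]
  exact ⟨v, hv, heig⟩

lemma specRad_pos_of_entry (hK : 1 ≤ K) (A : Matrix (Fin K) (Fin K) ℝ)
    (hA : ∀ i j, 0 ≤ A i j) (hirr : MatIrred A) (hpos : ∃ i j, 0 < A i j) :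
    0 < specRad A := by
  obtain ⟨v, hv, heig⟩ := perron_specRad hK A hA hirr
  obtain ⟨i, j, hij⟩ := hpos
  have h1 : 0 < A.mulVec v i := mulVec_pos_entry A hA (fun k => le_of_lt (hv k)) hij (hv j)
  have h2 : A.mulVec v i = specRad A * v i := by
    have := congrFun heig i
    simpa using this
  rw [h2] at h1
  by_contra hne
  push_neg at hne
  nlinarith [hv i]

lemma specRad_transpose (A : Matrix (Fin K) (Fin K) ℝ) : specRad Aᵀ = specRad A := by
  have hmap : (Aᵀ.map fun x => (x:ℂ)) = (A.map fun x => (x:ℂ))ᵀ := Matrix.transpose_map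
  have hspec : spectrum ℂ ((A.map fun x => (x:ℂ))ᵀ) = spectrum ℂ (A.map fun x => (x:ℂ)) := by
    ext μ
    rw [spectrum.mem_iff, spectrum.mem_iff]
    constructor
    · intro h hc
      apply h
      have heq : algebraMap ℂ (Matrix (Fin K) (Fin K) ℂ) μ - (A.map fun x => (x:ℂ))ᵀ
          = (algebraMap ℂ (Matrix (Fin K) (Fin K) ℂ) μ - (A.map fun x => (x:ℂ)))ᵀ := by
        rw [Matrix.transpose_sub]
        congr 1
        simp [Matrix.algebraMap_eq_diagonal]
      rw [heq]
      exact (Matrix.isUnit_transpose _).mpr hc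
    · intro h hc
      apply h
      have heq : algebraMap ℂ (Matrix (Fin K) (Fin K) ℂ) μ - (A.map fun x => (x:ℂ))
          = (algebraMap ℂ (Matrix (Fin K) (Fin K) ℂ) μ - (A.map fun x => (x:ℂ))ᵀ)ᵀ := by
        rw [Matrix.transpose_sub, Matrix.transpose_transpose]
        congr 1
        simp [Matrix.algebraMap_eq_diagonal]
      rw [heq]
      exact (Matrix.isUnit_transpose _).mpr hc
  unfold specRad
  rw [hmap, hspec]

lemma matIrred_transpose {A : Matrix (Fin K) (Fin K) ℝ} (h : MatIrred A) : MatIrred Aᵀ := by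
  intro S hSne hSuniv
  have hScne : Sᶜ.Nonempty := by
    rw [Set.nonempty_compl]
    exact hSuniv
  have hScuniv : Sᶜ ≠ Set.univ := by
    intro hc
    obtain ⟨i, hi⟩ := hSne
    have : i ∈ Sᶜ := hc ▸ Set.mem_univ i
    exact this hi
  obtain ⟨i, hi, j, hj, hij⟩ := h Sᶜ hScne hScuniv
  have hjS : j ∈ S := by
    by_contra hc
    exact hj hc
  exact ⟨j, hjS, i, hi, by rwa [Matrix.transpose_apply]⟩

end derived

section comparison
variable {K : ℕ}

lemma specRad_mono (hK : 1 ≤ K) (A B : Matrix (Fin K) (Fin K) ℝ)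
    (hA : ∀ i j, 0 ≤ A i j) (hB : ∀ i j, 0 ≤ B i j)
    (hAB : ∀ i j, A i j ≤ B i j) (hBirr : MatIrred B) :
    specRad A ≤ specRad B := by
  obtain ⟨q, hq, heig⟩ := perron_specRad hK B hB hBirr
  apply specRad_le_of_subinv hK A hA hq
  intro k
  have h1 : A.mulVec q k ≤ B.mulVec q k := by
    have e1 : A.mulVec q k = ∑ j, A k j * q j := rfl
    have e2 : B.mulVec q k = ∑ j, B k j * q j := rfl
    rw [e1, e2]
    exact Finset.sum_le_sum fun j _ => mul_le_mul_of_nonneg_right (hAB k j) (le_of_lt (hq j))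
  have h2 : B.mulVec q k = specRad B * q k := by
    have := congrFun heig k
    simpa using this
  linarith

lemma lt_specRad_of_strict (hK : 1 ≤ K) (M : Matrix (Fin K) (Fin K) ℝ)
    (hM : ∀ i j, 0 ≤ M i j) (hirr : MatIrred M) {p : Fin K → ℝ} (hp : ∀ k, 0 < p k)
    {c : ℝ} (h : ∀ k, c * p k < M.mulVec p k) : c < specRad M := by
  have hne : Nonempty (Fin K) := ⟨⟨0, hK⟩⟩
  have hMt : ∀ i j, 0 ≤ Mᵀ i j := fun i j => hM j i
  obtain ⟨w, hw, heig⟩ := perron_specRad hK Mᵀ hMt (matIrred_transpose hirr)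
  rw [specRad_transpose] at heig
  have key : specRad M * (∑ k, w k * p k) = ∑ k, w k * M.mulVec p k := by
    have h1 : ∑ k, w k * M.mulVec p k = ∑ k, Mᵀ.mulVec w k * p k := by
      have e1 : ∀ k, M.mulVec p k = ∑ j, M k j * p j := fun k => rfl
      have e2 : ∀ k, Mᵀ.mulVec w k = ∑ j, M j k * w j := fun k => rfl
      simp only [e1, e2, Finset.mul_sum, Finset.sum_mul]
      rw [Finset.sum_comm]
      refine Finset.sum_congr rfl fun k _ => Finset.sum_congr rfl fun j _ => by ring
    rw [h1]
    rw [heig]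
    rw [Finset.mul_sum]
    refine Finset.sum_congr rfl fun k _ => ?_
    simp only [Pi.smul_apply, smul_eq_mul]
    ring
  have hsum : 0 < ∑ k, w k * p k :=
    Finset.sum_pos (fun k _ => mul_pos (hw k) (hp k)) Finset.univ_nonempty
  have hstrict : c * (∑ k, w k * p k) < ∑ k, w k * M.mulVec p k := by
    rw [Finset.mul_sum]
    refine Finset.sum_lt_sum_of_nonempty Finset.univ_nonempty fun k _ => ?_
    calc c * (w k * p k) = w k * (c * p k) := by ring
      _ < w k * M.mulVec p k := by
          exact mul_lt_mul_of_pos_left (h k) (hw k)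
  rw [← key] at hstrict
  exact lt_of_mul_lt_mul_right (by linarith [hstrict]) (le_of_lt hsum) |>.trans_le (le_refl _)

end comparison

section bmat
variable {K N : ℕ} (V : Matrix (Fin K) (Fin K) ℝ) (z γ : Fin K → ℝ)
  (C : Matrix (Fin N) (Fin K) ℝ) (phat : Fin N → ℝ) (n : Fin N)

lemma Bmat_apply (i j : Fin K) :
    Bmat V z γ C phat n i j = γ i * (V i j + (phat n)⁻¹ * (z i * C n j)) := by
  unfold Bmat
  rw [Matrix.diagonal_mul]
  rw [Matrix.add_apply, Matrix.smul_apply, Matrix.vecMulVec_apply, smul_eq_mul]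

lemma Bmat_mulVec (p : Fin K → ℝ) (k : Fin K) :
    (Bmat V z γ C phat n).mulVec p k
      = γ k * (V.mulVec p k + (phat n)⁻¹ * (z k * C.mulVec p n)) := by
  have e1 : (Bmat V z γ C phat n).mulVec p k = ∑ j, Bmat V z γ C phat n k j * p j := rfl
  have e2 : V.mulVec p k = ∑ j, V k j * p j := rfl
  have e3 : C.mulVec p n = ∑ j, C n j * p j := rfl
  rw [e1, e2, e3]
  simp only [Bmat_apply]
  have h1 : ∀ j, γ k * (V k j + (phat n)⁻¹ * (z k * C n j)) * p j
      = γ k * (V k j * p j) + (γ k * ((phat n)⁻¹ * z k)) * (C n j * p j) := by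
    intro j; ring
  rw [Finset.sum_congr rfl fun j _ => h1 j, Finset.sum_add_distrib,
    ← Finset.mul_sum, ← Finset.mul_sum]
  ring

end bmat


theorem stmt12    {K N : ℕ} (hK : 2 ≤ K) (hN : 1 ≤ N)
    (V : Matrix (Fin K) (Fin K) ℝ) (z γ : Fin K → ℝ)
    (C : Matrix (Fin N) (Fin K) ℝ) (phat : Fin N → ℝ)
    (hV : ∀ i j, 0 ≤ V i j) (hVdiag : ∀ i, V i i = 0)
    (hz : ∀ k, 0 < z k) (hγ : ∀ k, 0 < γ k)
    (hC : ∀ n k, C n k = 0 ∨ C n k = 1) (hCcol : ∀ k, ∃ n, C n k = 1)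
    (hphat : ∀ n, 0 < phat n)
    (hirr : MatIrred V)
 :
    IsGreatest ((fun p => ⨅ k, SIR V z p k / γ k) '' Pset C phat)
      (⨆ n, specRad (Bmat V z γ C phat n))⁻¹ := by
  have hK1 : 1 ≤ K := by omega
  have hKne : Nonempty (Fin K) := ⟨⟨0, by omega⟩⟩
  have hNne : Nonempty (Fin N) := ⟨⟨0, hN⟩⟩
  set B : Fin N → Matrix (Fin K) (Fin K) ℝ := Bmat V z γ C phat with hB
  have hCnn : ∀ n k, (0:ℝ) ≤ C n k := by
    intro n k; rcases hC n k with h | h <;> rw [h] <;> norm_num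
  have hzc : ∀ n i j, 0 ≤ (phat n)⁻¹ * (z i * C n j) := fun n i j =>
    mul_nonneg (inv_nonneg.mpr (le_of_lt (hphat n)))
      (mul_nonneg (le_of_lt (hz i)) (hCnn n j))
  have hBnn : ∀ n i j, 0 ≤ B n i j := by
    intro n i j
    rw [hB, Bmat_apply]
    have h1 := hV i j
    have h2 := hzc n i j
    have h3 := le_of_lt (hγ i)
    nlinarith
  have hBirr : ∀ n, MatIrred (B n) := by
    intro n S hS1 hS2
    obtain ⟨i, hi, j, hj, hij⟩ := hirr S hS1 hS2
    refine ⟨i, hi, j, hj, ?_⟩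
    rw [hB, Bmat_apply]
    have h2 := hzc n i j
    have h3 := hγ i
    nlinarith
  have hVpos : ∃ i j, 0 < V i j := by
    obtain ⟨i, _, j, _, hij⟩ := hirr {(⟨0, by omega⟩ : Fin K)} ⟨_, rfl⟩ (by
      intro h
      have h1 : (⟨1, by omega⟩ : Fin K) ∈ ({(⟨0, by omega⟩ : Fin K)} : Set (Fin K)) :=
        h ▸ Set.mem_univ _
      simp only [Set.mem_singleton_iff, Fin.mk.injEq] at h1
      omega)
    exact ⟨i, j, hij⟩
  have hBpos : ∀ n, ∃ i j, 0 < B n i j := by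
    intro n
    obtain ⟨i, j, hij⟩ := hVpos
    refine ⟨i, j, ?_⟩
    rw [hB, Bmat_apply]
    have h2 := hzc n i j
    have h3 := hγ i
    nlinarith
  have hsrpos : ∀ n, 0 < specRad (B n) := fun n =>
    specRad_pos_of_entry hK1 (B n) (hBnn n) (hBirr n) (hBpos n)
  set lam := ⨆ n, specRad (B n) with hlam
  have hub : ∀ n, specRad (B n) ≤ lam := by
    intro n
    rw [hlam]
    exact le_ciSup (f := fun n => specRad (B n)) (Set.Finite.bddAbove (Set.finite_range _)) n
  obtain ⟨n1, hn1⟩ := exists_eq_ciSup_of_finite (f := fun n => specRad (B n))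
  rw [← hlam] at hn1
  have hlampos : 0 < lam := hn1 ▸ hsrpos n1
  have hnstar : ∃ n, specRad (B n) = lam ∧ ∃ k, C n k = 1 := by
    by_cases hrow : ∃ k, C n1 k = 1
    · exact ⟨n1, hn1, hrow⟩
    · push_neg at hrow
      have hrow0 : ∀ k, C n1 k = 0 := by
        intro k; rcases hC n1 k with h | h
        · exact h
        · exact absurd h (hrow k)
      obtain ⟨k0⟩ := hKne
      obtain ⟨m, hm⟩ := hCcol k0
      refine ⟨m, le_antisymm (hub m) ?_, k0, hm⟩
      rw [← hn1]
      apply specRad_mono hK1 _ _ (hBnn n1) (hBnn m) _ (hBirr m)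
      intro i j
      rw [hB, Bmat_apply, Bmat_apply, hrow0 j, mul_zero, mul_zero, add_zero]
      have h2 := hzc m i j
      have h3 := hγ i
      nlinarith
  obtain ⟨ns, hns, ks, hks⟩ := hnstar
  obtain ⟨v, hv, heig⟩ := perron_specRad hK1 (B ns) (hBnn ns) (hBirr ns)
  rw [hns] at heig
  have hcval : 0 < C.mulVec v ns := by
    have e : C.mulVec v ns = ∑ j, C ns j * v j := rfl
    rw [e]
    have h1 : 0 < C ns ks * v ks := by rw [hks]; simpa using hv ks
    exact lt_of_lt_of_le h1 (Finset.single_le_sum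
      (fun j _ => mul_nonneg (hCnn ns j) (le_of_lt (hv j))) (Finset.mem_univ ks))
  set c0 := phat ns / C.mulVec v ns with hc0
  have hc0pos : 0 < c0 := div_pos (hphat ns) hcval
  set p := c0 • v with hp
  have hppos : ∀ k, 0 < p k := fun k => mul_pos hc0pos (hv k)
  have hCp : C.mulVec p ns = phat ns := by
    rw [hp, Matrix.mulVec_smul]
    show c0 • C.mulVec v ns = phat ns
    rw [smul_eq_mul, hc0]
    field_simp
  have heigp : ∀ k, (B ns).mulVec p k = lam * p k := by
    intro k
    rw [hp, Matrix.mulVec_smul]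
    have h1 := congrFun heig k
    simp only [Pi.smul_apply, smul_eq_mul] at h1 ⊢
    rw [h1]; ring
  have hkey : ∀ k, lam * p k = γ k * (V.mulVec p k + z k) := by
    intro k
    have h1 := heigp k
    rw [hB, Bmat_mulVec, hCp] at h1
    rw [← h1]
    congr 2
    rw [show (phat ns)⁻¹ * (z k * phat ns) = z k * ((phat ns)⁻¹ * phat ns) from by ring,
      inv_mul_cancel₀ (ne_of_gt (hphat ns)), mul_one]
  have hden : ∀ (q : Fin K → ℝ), (∀ k, 0 ≤ q k) → ∀ k, 0 < V.mulVec q k + z k := by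
    intro q hq k
    have := mulVec_nonneg V hV hq k
    linarith [hz k]
  have hSIR : ∀ k, SIR V z p k / γ k = lam⁻¹ := by
    intro k
    unfold SIR
    rw [div_div]
    rw [show (V.mulVec p k + z k) * γ k = lam * p k from by rw [hkey k]; ring]
    rw [mul_comm lam (p k), ← div_div, div_self (ne_of_gt (hppos k)), one_div]
  have hfeas : ∀ m, C.mulVec p m ≤ phat m := by
    intro m
    by_contra hcon
    push_neg at hcon
    have hstrict : ∀ k, lam * p k < (B m).mulVec p k := by
      intro k
      rw [hB, Bmat_mulVec, hkey k]
      have h1 : z k < (phat m)⁻¹ * (z k * C.mulVec p m) := by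
        rw [show (phat m)⁻¹ * (z k * C.mulVec p m) = z k * (C.mulVec p m / phat m) from by
          field_simp]
        have h2 : 1 < C.mulVec p m / phat m := (one_lt_div (hphat m)).mpr hcon
        nlinarith [hz k]
      have h3 := hγ k
      nlinarith
    have h4 := lt_specRad_of_strict hK1 (B m) (hBnn m) (hBirr m) hppos hstrict
    have h5 := hub m
    linarith
  have hpP : p ∈ Pset C phat := ⟨fun k => le_of_lt (hppos k), hfeas⟩
  constructor
  · refine ⟨p, hpP, ?_⟩
    show (⨅ k, SIR V z p k / γ k) = lam⁻¹
    have h1 : (fun k => SIR V z p k / γ k) = fun _ => lam⁻¹ := funext hSIR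
    rw [h1]
    exact ciInf_const
  · rintro y ⟨q, hqP, rfl⟩
    obtain ⟨hq0, hqC⟩ := hqP
    show (⨅ k, SIR V z q k / γ k) ≤ lam⁻¹
    set t := ⨅ k, SIR V z q k / γ k with ht
    by_cases htpos : 0 < t
    · have htle : ∀ k, t ≤ SIR V z q k / γ k := fun k =>
        ciInf_le (Set.Finite.bddBelow (Set.finite_range _)) k
      have hqpos : ∀ k, 0 < q k := by
        intro k
        by_contra hc
        push_neg at hc
        have hq0k : q k = 0 := le_antisymm hc (hq0 k)
        have h1 : SIR V z q k / γ k = 0 := by unfold SIR; rw [hq0k]; simp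
        have h2 := htle k
        rw [h1] at h2
        linarith
      have hsub : ∀ k, (B n1).mulVec q k ≤ t⁻¹ * q k := by
        intro k
        rw [hB, Bmat_mulVec]
        have hd := hden q hq0 k
        have h1 : t * (γ k * (V.mulVec q k + z k)) ≤ q k := by
          have h2 := htle k
          unfold SIR at h2
          rw [div_div, le_div_iff₀ (mul_pos (hden q hq0 k) (hγ k))] at h2
          linarith
        have h2 : (phat n1)⁻¹ * (z k * C.mulVec q n1) ≤ z k := by
          calc (phat n1)⁻¹ * (z k * C.mulVec q n1)
              ≤ (phat n1)⁻¹ * (z k * phat n1) := by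
                apply mul_le_mul_of_nonneg_left _ (inv_nonneg.mpr (le_of_lt (hphat n1)))
                exact mul_le_mul_of_nonneg_left (hqC n1) (le_of_lt (hz k))
            _ = z k := by
                rw [show (phat n1)⁻¹ * (z k * phat n1) = z k * ((phat n1)⁻¹ * phat n1) from by
                  ring, inv_mul_cancel₀ (ne_of_gt (hphat n1)), mul_one]
        have h3 : γ k * (V.mulVec q k + (phat n1)⁻¹ * (z k * C.mulVec q n1))
            ≤ γ k * (V.mulVec q k + z k) := by
          apply mul_le_mul_of_nonneg_left _ (le_of_lt (hγ k))
          linarith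
        have h4 : γ k * (V.mulVec q k + z k) ≤ t⁻¹ * q k := by
          rw [show t⁻¹ * q k = q k / t from by rw [inv_eq_one_div]; ring,
            le_div_iff₀ htpos]
          linarith [h1]
        linarith
      have h5 : specRad (B n1) ≤ t⁻¹ :=
        specRad_le_of_subinv hK1 (B n1) (hBnn n1) hqpos hsub
      rw [hn1] at h5
      rw [inv_eq_one_div, le_div_iff₀ hlampos]
      calc t * lam ≤ t * t⁻¹ := mul_le_mul_of_nonneg_left h5 (le_of_lt htpos)
        _ = 1 := mul_inv_cancel₀ (ne_of_gt htpos)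
    · push_neg at htpos
      have h6 : 0 < lam⁻¹ := inv_pos.mpr hlampos
      linarith
end

section
/- Suppose the gain matrix V is irreducible. Then the SIR targets γ_1,…,γ_K are feasible, i.e., there exists p ∈ P with SIR_k(p) ≥ γ_k for every k = 1,…,K, if and only if max_{1≤n≤N} ρ(B^(n)) ≤ 1. -/
open Matrix

section Helpers

variable {K : ℕ}

lemma pf_algebraMap_mulVec (μ : ℂ) (v : Fin K → ℂ) :
    (algebraMap ℂ (Matrix (Fin K) (Fin K) ℂ)) μ *ᵥ v = μ • v := by
  ext k; simp [Matrix.algebraMap_eq_diagonal, Matrix.mulVec_diagonal]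

lemma pf_mem_spec_iff (A : Matrix (Fin K) (Fin K) ℂ) (μ : ℂ) :
    μ ∈ spectrum ℂ A ↔ ∃ v, v ≠ 0 ∧ A.mulVec v = μ • v := by
  rw [spectrum.mem_iff, Matrix.isUnit_iff_isUnit_det, isUnit_iff_ne_zero, not_not,
    ← Matrix.exists_mulVec_eq_zero_iff]
  constructor
  · rintro ⟨v, hv, h⟩
    refine ⟨v, hv, ?_⟩
    have : (algebraMap ℂ (Matrix (Fin K) (Fin K) ℂ)) μ *ᵥ v - A *ᵥ v = 0 := by
      rw [← Matrix.sub_mulVec]; exact h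
    rw [pf_algebraMap_mulVec] at this
    exact (sub_eq_zero.mp this).symm
  · rintro ⟨v, hv, h⟩
    exact ⟨v, hv, by rw [Matrix.sub_mulVec, h, pf_algebraMap_mulVec]; simp⟩

lemma pf_eig_abs_le (M : Matrix (Fin K) (Fin K) ℝ) (μ : ℂ) (v : Fin K → ℂ) (hv : v ≠ 0)
    (h : (M.map fun x => (x:ℂ)).mulVec v = μ • v) :
    ‖μ‖ ≤ ∑ i, ∑ j, |M i j| := by
  have hKpos : 0 < K := by
    rcases Function.ne_iff.mp hv with ⟨k, _⟩
    exact k.pos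
  haveI : Nonempty (Fin K) := ⟨⟨0, hKpos⟩⟩
  obtain ⟨i, -, hi⟩ := Finset.exists_max_image Finset.univ (fun k => ‖v k‖)
    ⟨⟨0, hKpos⟩, Finset.mem_univ _⟩
  have hvi : 0 < ‖v i‖ := by
    rcases Function.ne_iff.mp hv with ⟨k, hk⟩
    calc (0:ℝ) < ‖v k‖ := by simpa using hk
    _ ≤ ‖v i‖ := hi k (Finset.mem_univ k)
  have key : ‖μ‖ * ‖v i‖ ≤ (∑ j, |M i j|) * ‖v i‖ := by
    have h1 : ‖μ * v i‖ = ‖(M.map fun x => (x:ℂ)).mulVec v i‖ := by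
      rw [h]; simp [Pi.smul_apply, smul_eq_mul]
    rw [← norm_mul]
    calc ‖μ * v i‖
        = ‖∑ j, (M i j : ℂ) * v j‖ := by
          rw [h1]; simp [Matrix.mulVec, dotProduct]
      _ ≤ ∑ j, ‖(M i j : ℂ) * v j‖ := by
          exact norm_sum_le _ _
      _ ≤ ∑ j, |M i j| * ‖v i‖ := by
          apply Finset.sum_le_sum
          intro j _
          rw [norm_mul, Complex.norm_real, Real.norm_eq_abs]
          exact mul_le_mul_of_nonneg_left (hi j (Finset.mem_univ j)) (abs_nonneg _)
      _ = (∑ j, |M i j|) * ‖v i‖ := by rw [Finset.sum_mul]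
  have h2 : ‖μ‖ ≤ ∑ j, |M i j| := le_of_mul_le_mul_right key hvi
  refine h2.trans ?_
  exact Finset.single_le_sum (f := fun i' => ∑ j, |M i' j|) (fun i' _ => by positivity) (Finset.mem_univ i)

lemma pf_spec_bdd (M : Matrix (Fin K) (Fin K) ℝ) :
    BddAbove ((fun w : ℂ => ‖w‖) '' spectrum ℂ (M.map fun x => (x : ℂ))) := by
  refine ⟨∑ i, ∑ j, |M i j|, ?_⟩
  rintro x ⟨μ, hμ, rfl⟩
  obtain ⟨v, hv, h⟩ := (pf_mem_spec_iff _ μ).mp hμ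
  exact pf_eig_abs_le M μ v hv h

lemma pf_le_specRad_of_eig (M : Matrix (Fin K) (Fin K) ℝ) (r : ℝ) (hr : 0 ≤ r)
    (p : Fin K → ℝ) (hp : p ≠ 0) (h : M.mulVec p = r • p) : r ≤ specRad M := by
  have hmem : (r : ℂ) ∈ spectrum ℂ (M.map fun x => (x:ℂ)) := by
    rw [pf_mem_spec_iff]
    refine ⟨fun k => (p k : ℂ), ?_, ?_⟩
    · intro h0
      apply hp
      ext k
      have := congrFun h0 k
      simpa using this
    · ext k
      have := congrFun h k
      simp only [Matrix.mulVec, dotProduct, Pi.smul_apply, smul_eq_mul] at this ⊢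
      simp only [Matrix.map_apply]
      rw [← Complex.ofReal_mul]
      rw [← this]
      push_cast
      rfl
  have : ‖(r : ℂ)‖ ∈ (fun w : ℂ => ‖w‖) '' spectrum ℂ (M.map fun x => (x:ℂ)) :=
    Set.mem_image_of_mem _ hmem
  have habs : ‖(r:ℂ)‖ = r := by rw [Complex.norm_real, Real.norm_eq_abs, abs_of_nonneg hr]
  calc r = ‖(r:ℂ)‖ := habs.symm
    _ ≤ specRad M := le_csSup (pf_spec_bdd M) this

lemma pf_specRad_le_one (M : Matrix (Fin K) (Fin K) ℝ) (hM : ∀ i j, 0 ≤ M i j)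
    (p : Fin K → ℝ) (hp : ∀ k, 0 < p k) (h : ∀ k, M.mulVec p k ≤ p k) :
    specRad M ≤ 1 := by
  apply Real.sSup_le _ zero_le_one
  rintro x ⟨μ, hμ, rfl⟩
  obtain ⟨v, hv, hev⟩ := (pf_mem_spec_iff _ μ).mp hμ
  have hKpos : 0 < K := by
    rcases Function.ne_iff.mp hv with ⟨k, _⟩; exact k.pos
  obtain ⟨i, -, hi⟩ := Finset.exists_max_image Finset.univ
    (fun k => ‖v k‖ / p k) ⟨⟨0, hKpos⟩, Finset.mem_univ _⟩
  set t := ‖v i‖ / p i with ht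
  have hti : ‖v i‖ = t * p i := by
    rw [ht, div_mul_cancel₀ _ (hp i).ne']
  have htpos : 0 < t := by
    rcases Function.ne_iff.mp hv with ⟨k, hk⟩
    have : 0 < ‖v k‖ / p k := by
      apply div_pos (by simpa using hk) (hp k)
    exact lt_of_lt_of_le this (hi k (Finset.mem_univ k))
  have hbound : ∀ j, ‖v j‖ ≤ t * p j := by
    intro j
    have := hi j (Finset.mem_univ j)
    calc ‖v j‖ = ‖v j‖ / p j * p j := by
          rw [div_mul_cancel₀ _ (hp j).ne']
      _ ≤ t * p j := mul_le_mul_of_nonneg_right this (hp j).le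
  have key : ‖μ‖ * (t * p i) ≤ t * p i := by
    calc ‖μ‖ * (t * p i) = ‖μ * v i‖ := by
          rw [norm_mul, hti]
      _ = ‖∑ j, (M i j : ℂ) * v j‖ := by
          have := congrFun hev i
          simp only [Pi.smul_apply, smul_eq_mul] at this
          rw [← this]
          simp [Matrix.mulVec, dotProduct]
      _ ≤ ∑ j, ‖(M i j : ℂ) * v j‖ := norm_sum_le _ _
      _ ≤ ∑ j, M i j * (t * p j) := by
          apply Finset.sum_le_sum
          intro j _
          rw [norm_mul, Complex.norm_real, Real.norm_eq_abs, abs_of_nonneg (hM i j)]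
          exact mul_le_mul_of_nonneg_left (hbound j) (hM i j)
      _ = t * M.mulVec p i := by
          simp only [Matrix.mulVec, dotProduct, Finset.mul_sum]
          apply Finset.sum_congr rfl
          intro j _; ring
      _ ≤ t * p i := mul_le_mul_of_nonneg_left (h i) htpos.le
  have : 0 < t * p i := mul_pos htpos (hp i)
  show ‖μ‖ ≤ 1
  nlinarith

lemma pf_mulVec_nonneg {M : Matrix (Fin K) (Fin K) ℝ} (hM : ∀ i j, 0 ≤ M i j)
    {x : Fin K → ℝ} (hx : ∀ k, 0 ≤ x k) : ∀ k, 0 ≤ M.mulVec x k := by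
  intro k
  simp only [Matrix.mulVec, dotProduct]
  apply Finset.sum_nonneg
  intro j _
  exact mul_nonneg (hM k j) (hx j)

open Classical in
noncomputable def pf_psupp (x : Fin K → ℝ) : Finset (Fin K) :=
  Finset.univ.filter (fun k => 0 < x k)

lemma pf_psupp_step {M : Matrix (Fin K) (Fin K) ℝ} (hM : ∀ i j, 0 ≤ M i j)
    (hirr : MatIrred M) {x : Fin K → ℝ} (hx : ∀ k, 0 ≤ x k)
    (hne : (pf_psupp x).Nonempty) (hnu : pf_psupp x ≠ Finset.univ) :
    pf_psupp x ⊂ pf_psupp ((1 + M).mulVec x) ∧ ∀ k, 0 ≤ (1 + M).mulVec x k := by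
  classical
  have hy : ∀ k, (1 + M).mulVec x k = x k + M.mulVec x k := by
    intro k; rw [Matrix.add_mulVec, Matrix.one_mulVec]; rfl
  have hynn : ∀ k, 0 ≤ (1 + M).mulVec x k := by
    intro k; rw [hy k]; exact add_nonneg (hx k) (pf_mulVec_nonneg hM hx k)
  have hsub : pf_psupp x ⊆ pf_psupp ((1 + M).mulVec x) := by
    intro k hk
    simp only [pf_psupp, Finset.mem_filter, Finset.mem_univ, true_and] at hk ⊢
    rw [hy k]
    have := pf_mulVec_nonneg hM hx k
    linarith
  obtain ⟨j0, hj0⟩ := hne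
  have hS : ({k | ¬ 0 < x k} : Set (Fin K)).Nonempty := by
    obtain ⟨a, ha⟩ := not_forall.mp (fun h => hnu (Finset.eq_univ_iff_forall.mpr h))
    exact ⟨a, by simpa [pf_psupp] using ha⟩
  have hSnu : ({k | ¬ 0 < x k} : Set (Fin K)) ≠ Set.univ := by
    intro h
    have : j0 ∈ ({k | ¬ 0 < x k} : Set (Fin K)) := h ▸ Set.mem_univ j0
    simp only [Set.mem_setOf_eq] at this
    exact this (by simpa [pf_psupp] using hj0)
  obtain ⟨i, hiS, j, hjS, hij⟩ := hirr _ hS hSnu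
  simp only [Set.mem_setOf_eq, not_not] at hiS hjS
  have hinew : i ∈ pf_psupp ((1 + M).mulVec x) := by
    simp only [pf_psupp, Finset.mem_filter, Finset.mem_univ, true_and]
    rw [hy i]
    have h1 : 0 < M.mulVec x i := by
      have : M i j * x j ≤ M.mulVec x i :=
        Finset.single_le_sum (f := fun k => M i k * x k)
          (fun k _ => mul_nonneg (hM i k) (hx k)) (Finset.mem_univ j)
      have h2 : 0 < M i j * x j := mul_pos hij hjS
      linarith
    have := hx i
    linarith
  have hiold : i ∉ pf_psupp x := by simp [pf_psupp, hiS]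
  exact ⟨Finset.ssubset_iff_of_subset hsub |>.mpr ⟨i, hinew, hiold⟩, hynn⟩

lemma pf_pow_mulVec_pos_aux {M : Matrix (Fin K) (Fin K) ℝ} (hM : ∀ i j, 0 ≤ M i j)
    (hirr : MatIrred M) :
    ∀ (j : ℕ) (x : Fin K → ℝ), (∀ k, 0 ≤ x k) → (pf_psupp x).Nonempty →
      K ≤ j + (pf_psupp x).card → ∀ k, 0 < ((1 + M) ^ j).mulVec x k := by
  intro j
  induction j with
  | zero =>
    intro x hx hne hcard k
    have : pf_psupp x = Finset.univ := by
      apply Finset.eq_univ_of_card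
      have : (pf_psupp x).card ≤ Fintype.card (Fin K) := Finset.card_le_univ _
      simp only [Fintype.card_fin] at *
      omega
    have hk : k ∈ pf_psupp x := this ▸ Finset.mem_univ k
    simp only [pf_psupp, Finset.mem_filter, Finset.mem_univ, true_and] at hk
    simpa using hk
  | succ j ih =>
    intro x hx hne hcard k
    have hrw : ((1 + M) ^ (j+1)).mulVec x = ((1 + M) ^ j).mulVec ((1 + M).mulVec x) := by
      rw [Matrix.mulVec_mulVec, ← pow_succ]
    rw [hrw]
    by_cases hu : pf_psupp x = Finset.univ
    · have hy : ∀ k, 0 < (1 + M).mulVec x k := by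
        intro k
        have hk : k ∈ pf_psupp x := hu ▸ Finset.mem_univ k
        simp only [pf_psupp, Finset.mem_filter, Finset.mem_univ, true_and] at hk
        have : (1 + M).mulVec x k = x k + M.mulVec x k := by
          rw [Matrix.add_mulVec, Matrix.one_mulVec]; rfl
        rw [this]
        have := pf_mulVec_nonneg hM hx k
        linarith
      apply ih _ (fun k => (hy k).le)
      · exact ⟨k, by simp [pf_psupp, hy k]⟩
      · have : pf_psupp ((1 + M).mulVec x) = Finset.univ := Finset.eq_univ_of_forall
          (fun k => by simp [pf_psupp, hy k])
        rw [this, Finset.card_univ, Fintype.card_fin]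
        omega
    · obtain ⟨hss, hynn⟩ := pf_psupp_step hM hirr hx hne hu
      have hcard2 : (pf_psupp x).card + 1 ≤ (pf_psupp ((1 + M).mulVec x)).card :=
        Finset.card_lt_card hss
      apply ih _ hynn
      · obtain ⟨a, ha⟩ := hne
        exact ⟨a, hss.1 ha⟩
      · omega

lemma pf_pow_mulVec_pos {M : Matrix (Fin K) (Fin K) ℝ} (hM : ∀ i j, 0 ≤ M i j)
    (hirr : MatIrred M) (x : Fin K → ℝ) (hx : ∀ k, 0 ≤ x k) (hxne : x ≠ 0) :
    ∀ k, 0 < ((1 + M) ^ K).mulVec x k := by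
  have hne : (pf_psupp x).Nonempty := by
    rcases Function.ne_iff.mp hxne with ⟨k, hk⟩
    exact ⟨k, by simp [pf_psupp, lt_of_le_of_ne (hx k) (Ne.symm (by simpa using hk))]⟩
  exact pf_pow_mulVec_pos_aux hM hirr K x hx hne (by omega)

theorem pf_perron (hK : 0 < K) (M : Matrix (Fin K) (Fin K) ℝ)
    (hM : ∀ i j, 0 ≤ M i j) (hirr : MatIrred M) :
    ∃ r : ℝ, 0 ≤ r ∧ ∃ p : Fin K → ℝ, (∀ k, 0 < p k) ∧ M.mulVec p = r • p ∧
      ∀ (μ : ℝ) (q : Fin K → ℝ), (∀ k, 0 ≤ q k) → q ≠ 0 →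
        (∀ k, μ * q k ≤ M.mulVec q k) → μ ≤ r := by
  haveI : Nonempty (Fin K) := ⟨⟨0, hK⟩⟩
  set Λ : ℝ := ∑ i, ∑ j, M i j with hΛ
  set T : Set (ℝ × (Fin K → ℝ)) :=
    {x | x.1 ∈ Set.Icc (0:ℝ) Λ ∧ x.2 ∈ stdSimplex ℝ (Fin K) ∧
      ∀ k, x.1 * x.2 k ≤ M.mulVec x.2 k} with hT
  have hTsub : T ⊆ (Set.Icc (0:ℝ) Λ) ×ˢ stdSimplex ℝ (Fin K) := by
    rintro ⟨a, b⟩ ⟨h1, h2, -⟩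
    exact ⟨h1, h2⟩
  have hclosed : IsClosed T := by
    have h1 : IsClosed ((Set.Icc (0:ℝ) Λ) ×ˢ stdSimplex ℝ (Fin K)) :=
      IsClosed.prod isClosed_Icc (isClosed_stdSimplex ℝ (Fin K))
    have h2 : IsClosed {x : ℝ × (Fin K → ℝ) | ∀ k, x.1 * x.2 k ≤ M.mulVec x.2 k} := by
      rw [Set.setOf_forall]
      apply isClosed_iInter
      intro k
      apply isClosed_le
      · exact continuous_fst.mul ((continuous_apply k).comp continuous_snd)
      · simp only [Matrix.mulVec, dotProduct]
        apply continuous_finset_sum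
        intro j _
        exact continuous_const.mul ((continuous_apply j).comp continuous_snd)
    have : T = ((Set.Icc (0:ℝ) Λ) ×ˢ stdSimplex ℝ (Fin K)) ∩
        {x : ℝ × (Fin K → ℝ) | ∀ k, x.1 * x.2 k ≤ M.mulVec x.2 k} := by
      ext ⟨a, b⟩
      constructor
      · rintro ⟨u, v, w⟩; exact ⟨⟨u, v⟩, w⟩
      · rintro ⟨⟨u, v⟩, w⟩; exact ⟨u, v, w⟩
    rw [this]
    exact h1.inter h2
  have hcomp : IsCompact T :=
    ((isCompact_Icc).prod (isCompact_stdSimplex ℝ (Fin K))).of_isClosed_subset hclosed hTsub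
  have hΛnn : 0 ≤ Λ := by
    apply Finset.sum_nonneg; intro i _; apply Finset.sum_nonneg; intro j _; exact hM i j
  have hTne : T.Nonempty := by
    refine ⟨(0, fun _ => (K:ℝ)⁻¹), ⟨le_refl _, hΛnn⟩, ⟨fun k => by positivity, ?_⟩, ?_⟩
    · simp [Finset.sum_const, Finset.card_univ]
      field_simp
    · intro k
      simp only [zero_mul]
      exact pf_mulVec_nonneg hM (fun _ => by positivity) k
  obtain ⟨⟨r, p⟩, hmemT, hmax⟩ := hcomp.exists_isMaxOn hTne continuous_fst.continuousOn
  obtain ⟨⟨hr0, hrΛ⟩, hpsimp, hineq⟩ := hmemT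
  have hmaxP : ∀ (μ : ℝ) (q : Fin K → ℝ), (∀ k, 0 ≤ q k) → q ≠ 0 →
      (∀ k, μ * q k ≤ M.mulVec q k) → μ ≤ r := by
    intro μ q hq hqne hμq
    rcases le_or_gt μ 0 with hμ | hμ
    · exact hμ.trans hr0
    have hspos : 0 < ∑ k, q k := by
      rcases Function.ne_iff.mp hqne with ⟨k, hk⟩
      have hk' : 0 < q k := lt_of_le_of_ne (hq k) (Ne.symm (by simpa using hk))
      have : q k ≤ ∑ k, q k := Finset.single_le_sum (fun k _ => hq k) (Finset.mem_univ k)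
      linarith
    set s := (∑ k, q k)⁻¹ with hs
    have hspos' : 0 < s := by positivity
    set q' := s • q with hq'
    have hq'sim : q' ∈ stdSimplex ℝ (Fin K) := by
      constructor
      · intro k; exact mul_nonneg hspos'.le (hq k)
      · simp only [hq', Pi.smul_apply, smul_eq_mul, ← Finset.mul_sum]
        rw [hs, inv_mul_cancel₀ hspos.ne']
    have hq'ineq : ∀ k, μ * q' k ≤ M.mulVec q' k := by
      intro k
      have : M.mulVec q' = s • M.mulVec q := by rw [hq', Matrix.mulVec_smul]
      rw [this]
      simp only [hq', Pi.smul_apply, smul_eq_mul]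
      calc μ * (s * q k) = s * (μ * q k) := by ring
        _ ≤ s * M.mulVec q k := mul_le_mul_of_nonneg_left (hμq k) hspos'.le
    have hq'le1 : ∀ j, q' j ≤ 1 := by
      intro j
      have h1 : q' j ≤ ∑ k, q' k :=
        Finset.single_le_sum (fun k _ => hq'sim.1 k) (Finset.mem_univ j)
      rw [hq'sim.2] at h1
      exact h1
    have hμΛ : μ ≤ Λ := by
      calc μ = μ * ∑ k, q' k := by rw [hq'sim.2, mul_one]
        _ = ∑ k, μ * q' k := by rw [Finset.mul_sum]
        _ ≤ ∑ k, M.mulVec q' k := Finset.sum_le_sum (fun k _ => hq'ineq k)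
        _ = ∑ k, ∑ j, M k j * q' j := by simp [Matrix.mulVec, dotProduct]
        _ ≤ ∑ k, ∑ j, M k j := by
            apply Finset.sum_le_sum; intro k _
            apply Finset.sum_le_sum; intro j _
            calc M k j * q' j ≤ M k j * 1 :=
                  mul_le_mul_of_nonneg_left (hq'le1 j) (hM k j)
              _ = M k j := mul_one _
    have : (μ, q') ∈ T := ⟨⟨hμ.le, hμΛ⟩, hq'sim, hq'ineq⟩
    exact hmax this
  have hpne : p ≠ 0 := by
    intro h
    have := hpsimp.2
    rw [h] at this
    simp at this
  have heq : M.mulVec p = r • p := by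
    by_contra hne
    set y := M.mulVec p - r • p with hy
    have hynn : ∀ k, 0 ≤ y k := by
      intro k
      simp only [hy, Pi.sub_apply, Pi.smul_apply, smul_eq_mul, sub_nonneg]
      exact hineq k
    have hyne : y ≠ 0 := fun h => hne (by
      have : M.mulVec p - r • p = 0 := h
      linear_combination (norm := module) this)
    set q0 := ((1 + M) ^ K).mulVec p with hq0
    set u := ((1 + M) ^ K).mulVec y with hu
    have hq0pos : ∀ k, 0 < q0 k := pf_pow_mulVec_pos hM hirr p hpsimp.1 hpne
    have hupos : ∀ k, 0 < u k := pf_pow_mulVec_pos hM hirr y hynn hyne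
    have hcomm : Commute M ((1 + M) ^ K) :=
      ((Commute.one_right M).add_right (Commute.refl M)).pow_right K
    have hMp' : M.mulVec p = r • p + y := by
      rw [hy]; abel
    have hMq0 : M.mulVec q0 = r • q0 + u := by
      rw [hq0, Matrix.mulVec_mulVec, hcomm.eq, ← Matrix.mulVec_mulVec, hMp',
        Matrix.mulVec_add, Matrix.mulVec_smul]
    have hq0ne : q0 ≠ 0 := by
      intro h
      have := hq0pos ⟨0, hK⟩
      rw [h] at this
      simp at this
    haveI : Nonempty (Fin K) := ⟨⟨0, hK⟩⟩
    set lam := Finset.univ.inf' Finset.univ_nonempty (fun k => M.mulVec q0 k / q0 k) with hlam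
    have hlamr : r < lam := by
      rw [hlam, Finset.lt_inf'_iff]
      intro k _
      rw [lt_div_iff₀ (hq0pos k)]
      have := hupos k
      have h2 : M.mulVec q0 k = r * q0 k + u k := by
        rw [hMq0]; simp [Pi.add_apply, Pi.smul_apply, smul_eq_mul]
      linarith
    have hlamq : ∀ k, lam * q0 k ≤ M.mulVec q0 k := by
      intro k
      have h1 : lam ≤ M.mulVec q0 k / q0 k := Finset.inf'_le _ (Finset.mem_univ k)
      rw [← le_div_iff₀ (hq0pos k)]
      exact h1
    have := hmaxP lam q0 (fun k => (hq0pos k).le) hq0ne hlamq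
    linarith
  have hppos : ∀ k, 0 < p k := by
    by_contra hcon
    push_neg at hcon
    obtain ⟨k0, hk0⟩ := hcon
    have hS : ({k | ¬ 0 < p k} : Set (Fin K)).Nonempty := ⟨k0, fun h => absurd hk0 (not_le.mpr h)⟩
    have hSnu : ({k | ¬ 0 < p k} : Set (Fin K)) ≠ Set.univ := by
      intro h
      rcases Function.ne_iff.mp hpne with ⟨k, hk⟩
      have hk' : 0 < p k := lt_of_le_of_ne (hpsimp.1 k) (Ne.symm (by simpa using hk))
      have : k ∈ ({k | ¬ 0 < p k} : Set (Fin K)) := h ▸ Set.mem_univ k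
      exact this hk'
    obtain ⟨i, hiS, j, hjS, hij⟩ := hirr _ hS hSnu
    simp only [Set.mem_setOf_eq, not_not] at hiS hjS
    have hpi : p i = 0 := le_antisymm (not_lt.mp hiS) (hpsimp.1 i)
    have h1 : 0 < M.mulVec p i := by
      have h2 : M i j * p j ≤ M.mulVec p i :=
        Finset.single_le_sum (f := fun k => M i k * p k)
          (fun k _ => mul_nonneg (hM i k) (hpsimp.1 k)) (Finset.mem_univ j)
      have : 0 < M i j * p j := mul_pos hij hjS
      linarith
    have : M.mulVec p i = 0 := by rw [heq]; simp [hpi]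
    linarith
  exact ⟨r, hr0, p, hppos, heq, hmaxP⟩

end Helpers

section BmatHelpers

variable {K N : ℕ} (V : Matrix (Fin K) (Fin K) ℝ) (z γ : Fin K → ℝ)
    (C : Matrix (Fin N) (Fin K) ℝ) (phat : Fin N → ℝ)

lemma pf_Bmat_apply (n : Fin N) (i j : Fin K) :
    Bmat V z γ C phat n i j = γ i * (V i j + (phat n)⁻¹ * (z i * C n j)) := by
  simp [Bmat, Matrix.diagonal_mul, Matrix.add_apply, Matrix.smul_apply,
    Matrix.vecMulVec_apply, smul_eq_mul]

lemma pf_Bmat_mulVec (n : Fin N) (p : Fin K → ℝ) (k : Fin K) :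
    (Bmat V z γ C phat n).mulVec p k
      = γ k * (V.mulVec p k + (phat n)⁻¹ * (z k * C.mulVec p n)) := by
  simp only [Matrix.mulVec, dotProduct]
  calc ∑ j, Bmat V z γ C phat n k j * p j
      = ∑ j, (γ k * (V k j * p j) + (γ k * ((phat n)⁻¹ * z k)) * (C n j * p j)) := by
        refine Finset.sum_congr rfl fun j _ => ?_
        rw [pf_Bmat_apply]; ring
    _ = γ k * ∑ j, V k j * p j + (γ k * ((phat n)⁻¹ * z k)) * ∑ j, C n j * p j := by
        rw [Finset.sum_add_distrib, Finset.mul_sum, Finset.mul_sum]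
    _ = γ k * (∑ j, V k j * p j + (phat n)⁻¹ * (z k * ∑ j, C n j * p j)) := by ring

end BmatHelpers

theorem stmt13    {K N : ℕ} (hK : 2 ≤ K) (hN : 1 ≤ N)
    (V : Matrix (Fin K) (Fin K) ℝ) (z γ : Fin K → ℝ)
    (C : Matrix (Fin N) (Fin K) ℝ) (phat : Fin N → ℝ)
    (hV : ∀ i j, 0 ≤ V i j) (hVdiag : ∀ i, V i i = 0)
    (hz : ∀ k, 0 < z k) (hγ : ∀ k, 0 < γ k)
    (hC : ∀ n k, C n k = 0 ∨ C n k = 1) (hCcol : ∀ k, ∃ n, C n k = 1)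
    (hphat : ∀ n, 0 < phat n)
    (hirr : MatIrred V)
 :
    (∃ p ∈ Pset C phat, ∀ k, γ k ≤ SIR V z p k) ↔
      (⨆ n, specRad (Bmat V z γ C phat n)) ≤ 1 := by
  haveI : Nonempty (Fin N) := ⟨⟨0, hN⟩⟩
  have hK0 : 0 < K := by omega
  haveI : Nonempty (Fin K) := ⟨⟨0, hK0⟩⟩
  have hCnn : ∀ n j, (0:ℝ) ≤ C n j := by
    intro n j; rcases hC n j with h | h <;> rw [h] <;> norm_num
  have hBnn : ∀ n, ∀ i j, 0 ≤ Bmat V z γ C phat n i j := by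
    intro n i j
    rw [pf_Bmat_apply]
    have h1 : 0 ≤ (phat n)⁻¹ * (z i * C n j) :=
      mul_nonneg (inv_nonneg.mpr (hphat n).le) (mul_nonneg (hz i).le (hCnn n j))
    exact mul_nonneg (hγ i).le (by linarith [hV i j])
  have hBirr : ∀ n, MatIrred (Bmat V z γ C phat n) := by
    intro n S h1 h2
    obtain ⟨i, hi, j, hj, hVij⟩ := hirr S h1 h2
    refine ⟨i, hi, j, hj, ?_⟩
    rw [pf_Bmat_apply]
    have h3 : 0 ≤ (phat n)⁻¹ * (z i * C n j) :=
      mul_nonneg (inv_nonneg.mpr (hphat n).le) (mul_nonneg (hz i).le (hCnn n j))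
    exact mul_pos (hγ i) (by linarith)
  constructor
  · -- feasibility implies spectral condition
    rintro ⟨p, ⟨hp0, hpc⟩, hsir⟩
    have hD : ∀ k, 0 < V.mulVec p k + z k := fun k =>
      add_pos_of_nonneg_of_pos (pf_mulVec_nonneg hV hp0 k) (hz k)
    have hgd : ∀ k, γ k * (V.mulVec p k + z k) ≤ p k := by
      intro k
      have h1 := hsir k
      rw [SIR] at h1
      exact (le_div_iff₀ (hD k)).mp h1
    have hppos : ∀ k, 0 < p k := fun k =>
      lt_of_lt_of_le (mul_pos (hγ k) (hD k)) (hgd k)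
    apply ciSup_le
    intro n
    apply pf_specRad_le_one _ (hBnn n) p hppos
    intro k
    rw [pf_Bmat_mulVec]
    have h1 : (phat n)⁻¹ * (z k * C.mulVec p n) ≤ z k := by
      have h2 : z k * C.mulVec p n ≤ z k * phat n :=
        mul_le_mul_of_nonneg_left (hpc n) (hz k).le
      calc (phat n)⁻¹ * (z k * C.mulVec p n)
          ≤ (phat n)⁻¹ * (z k * phat n) :=
            mul_le_mul_of_nonneg_left h2 (inv_nonneg.mpr (hphat n).le)
        _ = z k := by
            rw [mul_comm (z k) (phat n), ← mul_assoc, inv_mul_cancel₀ (hphat n).ne', one_mul]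
    calc γ k * (V.mulVec p k + (phat n)⁻¹ * (z k * C.mulVec p n))
        ≤ γ k * (V.mulVec p k + z k) :=
          mul_le_mul_of_nonneg_left (by linarith) (hγ k).le
      _ ≤ p k := hgd k
  · -- spectral condition implies feasibility
    intro hsup
    have H : ∀ n, ∃ r : ℝ, 0 ≤ r ∧ ∃ p : Fin K → ℝ, (∀ k, 0 < p k) ∧
        (Bmat V z γ C phat n).mulVec p = r • p ∧
        ∀ (μ : ℝ) (q : Fin K → ℝ), (∀ k, 0 ≤ q k) → q ≠ 0 →
          (∀ k, μ * q k ≤ (Bmat V z γ C phat n).mulVec q k) → μ ≤ r :=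
      fun n => pf_perron hK0 _ (hBnn n) (hBirr n)
    choose R hR0 P hPpos hPeig hPmax using H
    have hPne : ∀ n, P n ≠ 0 := by
      intro n h
      have := hPpos n ⟨0, hK0⟩
      rw [h] at this
      simp at this
    have hRle1 : ∀ n, R n ≤ 1 := by
      intro n
      have h1 : R n ≤ specRad (Bmat V z γ C phat n) :=
        pf_le_specRad_of_eig _ _ (hR0 n) (P n) (hPne n) (hPeig n)
      have h2 : specRad (Bmat V z γ C phat n) ≤ ⨆ m, specRad (Bmat V z γ C phat m) :=
        le_ciSup (f := fun m => specRad (Bmat V z γ C phat m))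
          (Set.Finite.bddAbove (Set.finite_range _)) n
      linarith
    obtain ⟨ns, -, hns⟩ := Finset.exists_max_image Finset.univ R
      ⟨⟨0, hN⟩, Finset.mem_univ _⟩
    set q := P ns with hq
    set r := R ns with hr
    -- comparison: no other normalized constraint exceeds that of ns
    have comp : ∀ m : Fin N, C.mulVec q m * phat ns ≤ C.mulVec q ns * phat m := by
      intro m
      by_contra hlt
      push_neg at hlt
      have hb : C.mulVec q ns / phat ns < C.mulVec q m / phat m := by
        rw [div_lt_div_iff₀ (hphat ns) (hphat m)]
        linarith
      have hstrict : ∀ k, r * q k < (Bmat V z γ C phat m).mulVec q k := by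
        intro k
        have he : γ k * (V.mulVec q k + (phat ns)⁻¹ * (z k * C.mulVec q ns)) = r * q k := by
          have h1 := congrFun (hPeig ns) k
          rw [pf_Bmat_mulVec] at h1
          simpa using h1
        rw [pf_Bmat_mulVec]
        have e1 : (phat ns)⁻¹ * (z k * C.mulVec q ns) = z k * (C.mulVec q ns / phat ns) := by
          rw [div_eq_mul_inv]; ring
        have e2 : (phat m)⁻¹ * (z k * C.mulVec q m) = z k * (C.mulVec q m / phat m) := by
          rw [div_eq_mul_inv]; ring
        have h3 : z k * (C.mulVec q ns / phat ns) < z k * (C.mulVec q m / phat m) :=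
          mul_lt_mul_of_pos_left hb (hz k)
        rw [← he]
        apply mul_lt_mul_of_pos_left _ (hγ k)
        rw [e1, e2]
        linarith
      set lam := Finset.univ.inf' Finset.univ_nonempty
        (fun k => (Bmat V z γ C phat m).mulVec q k / q k) with hlam
      have hlamr : r < lam := by
        rw [hlam, Finset.lt_inf'_iff]
        intro k _
        rw [lt_div_iff₀ (hPpos ns k)]
        exact hstrict k
      have hlamq : ∀ k, lam * q k ≤ (Bmat V z γ C phat m).mulVec q k := by
        intro k
        have h1 : lam ≤ (Bmat V z γ C phat m).mulVec q k / q k :=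
          Finset.inf'_le _ (Finset.mem_univ k)
        rw [← le_div_iff₀ (hPpos ns k)]
        exact h1
      have h4 := hPmax m lam q (fun k => (hPpos ns k).le) (hPne ns) hlamq
      have h5 := hns m (Finset.mem_univ m)
      linarith
    -- the ns-th constraint value is positive
    have hCq_ns_pos : 0 < C.mulVec q ns := by
      obtain ⟨n0, hn0⟩ := hCcol ⟨0, hK0⟩
      have h0 : 0 < C.mulVec q n0 := by
        have h1 : C n0 ⟨0, hK0⟩ * q ⟨0, hK0⟩ ≤ C.mulVec q n0 :=
          Finset.single_le_sum (f := fun j => C n0 j * q j)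
            (fun j _ => mul_nonneg (hCnn n0 j) (hPpos ns j).le) (Finset.mem_univ _)
        have h2 : 0 < C n0 ⟨0, hK0⟩ * q ⟨0, hK0⟩ := by
          rw [hn0, one_mul]
          exact hPpos ns ⟨0, hK0⟩
        linarith
      have h3 := comp n0
      nlinarith [hphat ns, hphat n0]
    set s := phat ns / C.mulVec q ns with hs
    have hspos : 0 < s := div_pos (hphat ns) hCq_ns_pos
    have hq'pos : ∀ k, 0 < (s • q) k := fun k => mul_pos hspos (hPpos ns k)
    have hCq'ns : C.mulVec (s • q) ns = phat ns := by
      rw [Matrix.mulVec_smul]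
      simp only [Pi.smul_apply, smul_eq_mul]
      rw [hs]
      field_simp
    refine ⟨s • q, ⟨fun k => (hq'pos k).le, ?_⟩, ?_⟩
    · intro m
      rw [Matrix.mulVec_smul]
      simp only [Pi.smul_apply, smul_eq_mul]
      rw [hs, div_mul_eq_mul_div, div_le_iff₀ hCq_ns_pos]
      have := comp m
      nlinarith
    · intro k
      rw [SIR]
      have hD : 0 < V.mulVec (s • q) k + z k :=
        add_pos_of_nonneg_of_pos (pf_mulVec_nonneg hV (fun j => (hq'pos j).le) k) (hz k)
      rw [le_div_iff₀ hD]
      have h1 : (Bmat V z γ C phat ns).mulVec (s • q) = r • (s • q) := by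
        rw [Matrix.mulVec_smul, hPeig ns]
        ext j
        simp only [Pi.smul_apply, smul_eq_mul]
        ring
      have h2 := congrFun h1 k
      rw [pf_Bmat_mulVec, hCq'ns] at h2
      have h3 : (phat ns)⁻¹ * (z k * phat ns) = z k := by
        rw [mul_comm (z k) (phat ns), ← mul_assoc, inv_mul_cancel₀ (hphat ns).ne', one_mul]
      rw [h3] at h2
      simp only [Pi.smul_apply, smul_eq_mul] at h2
      have h4 := hRle1 ns
      simp only [Pi.smul_apply, smul_eq_mul]
      have h5 : 0 < s * q k := mul_pos hspos (hPpos ns k)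
      nlinarith
end
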